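/- arXiv:1304.0092 — 6 statements merged into one kernel-verified Lean document; each statement's English description precedes it below -/
import Mathlib

section
/- Let p be a prime and t a positive integer with base-p representation t = Σ_λ t_λ p^λ. The number of (m+1)-tuples (e_0,...,e_m) of non-negative integers with e_0 + ... + e_m = t such that the multinomial coefficient t!/(e_0!···e_m!) is not divisible by p equals Π_λ C(m + t_λ, t_λ). -/
open Finset Nat

private lemma mySum_div_le {α : Type*} (s : Finset α) (e : α → ℕ) (d : ℕ) :
    ∑ j ∈ s, e j / d ≤ (∑ j ∈ s, e j) / d := by
  induction s using Finset.cons_induction with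
  | empty => simp
  | cons a s ha ih =>
    rw [Finset.sum_cons, Finset.sum_cons]
    exact le_trans (Nat.add_le_add_left ih _) (Nat.add_div_le_add_div _ _ _)

private lemma myPadicValNat_prod {p : ℕ} (hp : p.Prime) {α : Type*} (s : Finset α)
    (f : α → ℕ) (hf : ∀ j ∈ s, f j ≠ 0) :
    padicValNat p (∏ j ∈ s, f j) = ∑ j ∈ s, padicValNat p (f j) := by
  haveI : Fact p.Prime := ⟨hp⟩
  induction s using Finset.cons_induction with
  | empty => simp
  | cons a s ha ih =>
    rw [Finset.prod_cons, Finset.sum_cons,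
      padicValNat.mul (hf a (Finset.mem_cons_self _ _))
        (Finset.prod_ne_zero_iff.2 fun j hj => hf j (Finset.mem_cons_of_mem hj)),
      ih (fun j hj => hf j (Finset.mem_cons_of_mem hj))]

private lemma not_dvd_multinomial_iff {p : ℕ} (hp : p.Prime) {n : ℕ} (e : Fin n → ℕ) :
    ¬ p ∣ Nat.multinomial Finset.univ e ↔
      ∀ k : ℕ, ∑ j, e j / p ^ (k + 1) = (∑ j, e j) / p ^ (k + 1) := by
  haveI : Fact p.Prime := ⟨hp⟩
  set t := ∑ j, e j with ht
  have hmul : (∏ j, (e j)!) * Nat.multinomial Finset.univ e = t ! :=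
    Nat.multinomial_spec _ _
  set b := Nat.log p t + 1 with hb
  have hej : ∀ j, e j ≤ t := fun j => Finset.single_le_sum (fun i _ => Nat.zero_le _)
    (Finset.mem_univ j)
  have hvalt : padicValNat p (t !) = ∑ i ∈ Finset.Ico 1 b, t / p ^ i :=
    padicValNat_factorial (by omega)
  have hvale : ∀ j, padicValNat p ((e j)!) = ∑ i ∈ Finset.Ico 1 b, e j / p ^ i := fun j =>
    padicValNat_factorial (lt_of_le_of_lt (Nat.log_mono_right (hej j)) (by omega))
  have hkey : padicValNat p (t !) =
      ∑ j, padicValNat p ((e j)!) + padicValNat p (Nat.multinomial Finset.univ e) := by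
    rw [← hmul, padicValNat.mul (Finset.prod_ne_zero_iff.2 fun j _ => (Nat.factorial_ne_zero _))
      (Nat.multinomial_pos _ _).ne', myPadicValNat_prod hp _ _
      (fun j _ => Nat.factorial_ne_zero _)]
  have h0 : ¬ p ∣ Nat.multinomial Finset.univ e ↔
      padicValNat p (Nat.multinomial Finset.univ e) = 0 := by
    rw [padicValNat.eq_zero_iff]
    simp [hp.ne_one, (Nat.multinomial_pos _ _).ne']
  rw [h0]
  have hsum : (∑ j, padicValNat p ((e j)!)) = ∑ i ∈ Finset.Ico 1 b, ∑ j, e j / p ^ i := by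
    simp_rw [hvale]
    rw [Finset.sum_comm]
  have hiff1 : padicValNat p (Nat.multinomial Finset.univ e) = 0 ↔
      (∑ i ∈ Finset.Ico 1 b, ∑ j, e j / p ^ i) = ∑ i ∈ Finset.Ico 1 b, t / p ^ i := by
    rw [← hsum, ← hvalt]
    omega
  rw [hiff1, Finset.sum_eq_sum_iff_of_le (fun i _ => mySum_div_le _ _ _)]
  constructor
  · intro h k
    by_cases hkb : k + 1 < b
    · exact h (k + 1) (Finset.mem_Ico.2 ⟨by omega, hkb⟩)
    · have htlt : t < p ^ (k + 1) :=
        lt_of_lt_of_le (Nat.lt_pow_succ_log_self hp.one_lt t)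
          (Nat.pow_le_pow_right hp.pos (by omega))
      rw [Nat.div_eq_of_lt htlt]
      exact Finset.sum_eq_zero fun j _ =>
        Nat.div_eq_of_lt (lt_of_le_of_lt (hej j) htlt)
  · intro h i hi
    obtain ⟨k, rfl⟩ : ∃ k, i = k + 1 := ⟨i - 1, by have := (Finset.mem_Ico.1 hi).1; omega⟩
    exact h k

private lemma not_dvd_multinomial_step {p : ℕ} (hp : p.Prime) {n : ℕ} (e : Fin n → ℕ) :
    ¬ p ∣ Nat.multinomial Finset.univ e ↔
      (∑ j, e j / p = (∑ j, e j) / p) ∧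
        ¬ p ∣ Nat.multinomial Finset.univ (fun j => e j / p) := by
  rw [not_dvd_multinomial_iff hp, not_dvd_multinomial_iff hp]
  have hdd : ∀ (a : ℕ) (k : ℕ), a / p / p ^ (k + 1) = a / p ^ (k + 2) := fun a k => by
    rw [Nat.div_div_eq_div_mul, ← pow_succ']
  constructor
  · intro h
    have h0 := h 0
    norm_num at h0
    refine ⟨h0, fun k => ?_⟩
    have hk := h (k + 1)
    rw [h0]
    simp_rw [hdd]
    exact hk
  · rintro ⟨h0, h⟩ k
    cases k with
    | zero => simpa using h0
    | succ k =>
      have hk := h k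
      rw [h0] at hk
      simp_rw [hdd] at hk
      exact hk

private lemma card_filter_rec {p : ℕ} (hp : p.Prime) (m t : ℕ) :
    ((Finset.Nat.antidiagonalTuple (m + 1) t).filter
        (fun e => ¬ p ∣ Nat.multinomial Finset.univ e)).card
      = (Finset.Nat.antidiagonalTuple (m + 1) (t % p)).card *
        ((Finset.Nat.antidiagonalTuple (m + 1) (t / p)).filter
          (fun e => ¬ p ∣ Nat.multinomial Finset.univ e)).card := by
  rw [← Finset.card_product]
  apply Finset.card_bij' (fun e _ => ((fun j => e j % p), (fun j => e j / p)))
    (fun a _ => fun j => a.1 j + p * a.2 j)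
  · -- maps into product
    intro e he
    rw [Finset.mem_filter, Finset.Nat.mem_antidiagonalTuple] at he
    obtain ⟨hsum, hnd⟩ := he
    rw [not_dvd_multinomial_step hp] at hnd
    obtain ⟨hdiv, hnd2⟩ := hnd
    rw [hsum] at hdiv
    have hmod : ∑ j, e j % p = t % p := by
      have h1 : ∑ j, (e j % p + p * (e j / p)) = t := by
        simp_rw [Nat.mod_add_div]; exact hsum
      rw [Finset.sum_add_distrib, ← Finset.mul_sum, hdiv] at h1
      have := Nat.mod_add_div t p
      omega
    rw [Finset.mem_product, Finset.Nat.mem_antidiagonalTuple, Finset.mem_filter,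
      Finset.Nat.mem_antidiagonalTuple]
    exact ⟨hmod, hdiv, hnd2⟩
  · -- maps back
    rintro ⟨a, bb⟩ hab
    rw [Finset.mem_product, Finset.Nat.mem_antidiagonalTuple, Finset.mem_filter,
      Finset.Nat.mem_antidiagonalTuple] at hab
    obtain ⟨ha, hb, hnd⟩ := hab
    have hap : ∀ j, a j < p := fun j =>
      lt_of_le_of_lt (ha ▸ Finset.single_le_sum (fun i _ => Nat.zero_le _) (Finset.mem_univ j))
        (Nat.mod_lt _ hp.pos)
    have hdivj : ∀ j, (a j + p * bb j) / p = bb j := fun j => by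
      rw [Nat.add_mul_div_left _ _ hp.pos, Nat.div_eq_of_lt (hap j), zero_add]
    rw [Finset.mem_filter, Finset.Nat.mem_antidiagonalTuple]
    constructor
    · rw [Finset.sum_add_distrib, ← Finset.mul_sum, ha, hb, Nat.mod_add_div]
    · rw [not_dvd_multinomial_step hp]
      have hsum : ∑ j, (a j + p * bb j) = t := by
        rw [Finset.sum_add_distrib, ← Finset.mul_sum, ha, hb, Nat.mod_add_div]
      constructor
      · simp_rw [hdivj, hb, hsum]
      · simp_rw [hdivj]; exact hnd
  · intro e he
    funext j
    exact Nat.mod_add_div _ _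
  · rintro ⟨a, bb⟩ hab
    rw [Finset.mem_product, Finset.Nat.mem_antidiagonalTuple, Finset.mem_filter,
      Finset.Nat.mem_antidiagonalTuple] at hab
    obtain ⟨ha, hb, hnd⟩ := hab
    have hap : ∀ j, a j < p := fun j =>
      lt_of_le_of_lt (ha ▸ Finset.single_le_sum (fun i _ => Nat.zero_le _) (Finset.mem_univ j))
        (Nat.mod_lt _ hp.pos)
    ext j
    · simp [Nat.add_mul_mod_self_left, Nat.mod_eq_of_lt (hap j)]
    · simp [Nat.add_mul_div_left _ _ hp.pos, Nat.div_eq_of_lt (hap j)]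

private noncomputable def tupleSymEquiv (k n : ℕ) : {f : Fin k → ℕ // ∑ i, f i = n} ≃ Sym (Fin k) n where
  toFun f := ⟨Finsupp.toMultiset (Finsupp.equivFunOnFinite.symm f.1), by
    rw [Finsupp.card_toMultiset, Finsupp.sum_fintype _ _ (fun _ => rfl)]
    simpa using f.2⟩
  invFun s := ⟨fun i => Multiset.count i s.1, by
    rw [show (∑ i, Multiset.count i s.1) = Multiset.card s.1 from ?_, s.2]
    rw [← Multiset.toFinset_sum_count_eq]
    exact (Finset.sum_subset (Finset.subset_univ _) fun x _ hx =>
      Multiset.count_eq_zero_of_notMem (by simpa using hx)).symm⟩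
  left_inv f := by
    ext i
    simp [Finsupp.count_toMultiset]
  right_inv s := by
    apply Subtype.ext
    apply Multiset.ext.2
    intro a
    simp [Finsupp.count_toMultiset]

private lemma card_adt (k n : ℕ) :
    (Finset.Nat.antidiagonalTuple (k + 1) n).card = (k + n).choose n := by
  rw [← Fintype.card_coe]
  rw [Fintype.card_congr
    ((Equiv.subtypeEquivRight fun f => Finset.Nat.mem_antidiagonalTuple).trans
      (tupleSymEquiv (k + 1) n))]
  rw [Sym.card_sym_eq_choose]
  simp

private lemma prod_range_len (L : List ℕ) (f : ℕ → ℕ) :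
    ∏ l ∈ Finset.range L.length, f (L.getD l 0) = (L.map f).prod := by
  induction L with
  | nil => simp
  | cons a L ih =>
    rw [List.length_cons, Finset.prod_range_succ', List.map_cons, List.prod_cons]
    simp only [List.getD_cons_succ, List.getD_cons_zero]
    rw [ih, mul_comm]

private lemma prod_range_getD (L : List ℕ) (f : ℕ → ℕ) (hf : f 0 = 1) (n : ℕ)
    (hn : L.length ≤ n) : ∏ l ∈ Finset.range n, f (L.getD l 0) = (L.map f).prod := by
  rw [Finset.range_eq_Ico, ← Finset.prod_Ico_consecutive _ (Nat.zero_le L.length) hn,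
    ← Finset.range_eq_Ico, prod_range_len]
  rw [Finset.prod_congr rfl (fun x hx => ?_), Finset.prod_const_one, mul_one]
  rw [List.getD_eq_default _ _ (Finset.mem_Ico.1 hx).1, hf]

private lemma main_aux (p : ℕ) (hp : p.Prime) (m : ℕ) (t : ℕ) :
    ((Finset.Nat.antidiagonalTuple (m + 1) t).filter
        (fun e => ¬ p ∣ Nat.multinomial Finset.univ e)).card
      = ((Nat.digits p t).map (fun d => (m + d).choose d)).prod := by
  induction t using Nat.strong_induction_on with
  | _ t ih =>
    rcases Nat.eq_zero_or_pos t with rfl | ht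
    · rw [Finset.Nat.antidiagonalTuple_zero_right]
      have h1 : Nat.multinomial (Finset.univ : Finset (Fin (m + 1))) 0 = 1 := by
        simp [Nat.multinomial]
      simp [Finset.filter_singleton, h1, hp.one_lt.ne']
    · have hdiv : t / p < t := Nat.div_lt_self ht hp.one_lt
      rw [card_filter_rec hp, ih (t / p) hdiv,
        Nat.digits_def' hp.one_lt ht, List.map_cons, List.prod_cons, card_adt]

/-- The number of (m+1)-tuples (e_0,...,e_m) of non-negative integers summing to t
such that the multinomial coefficient is not divisible by the prime p equals
the product over base-p digits t_λ of t of C(m + t_λ, t_λ). -/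
theorem stmt0 (p : ℕ) (hp : p.Prime) (t m : ℕ) (ht : 0 < t) :
    ((Finset.Nat.antidiagonalTuple (m + 1) t).filter
        (fun e => ¬ p ∣ Nat.multinomial Finset.univ e)).card
      = ∏ l ∈ Finset.range (t + 1),
          (m + (Nat.digits p t).getD l 0).choose ((Nat.digits p t).getD l 0) := by
  rw [main_aux p hp m t,
    prod_range_getD _ (fun d => (m + d).choose d) (by simp) (t + 1) ?_]
  rw [Nat.digits_len p t hp.one_lt ht.ne']
  have := Nat.log_le_self p t
  omega
end

section
/- Generalized Lucas theorem for multinomial coefficients: for a prime p, positive integer t, and non-negative integers e_0,...,e_m with e_0+...+e_m = t, the multinomial coefficient t!/(e_0!···e_m!) is congruent modulo p to the product over λ of the multinomial coefficients t_λ!/(e_{0,λ}!···e_{m,λ}!), where n_λ denotes the λ-th base-p digit of n (and a multinomial coefficient with digit sum not equal to t_λ is interpreted as 0). -/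
open Finset

namespace Stmt2Aux

/-- the `l`-th base-`p` digit of `n` -/
def D (p n l : ℕ) : ℕ := n / p ^ l % p

lemma D_succ (p n l : ℕ) : D p n (l + 1) = D p (n / p) l := by
  simp [D, pow_succ, Nat.div_div_eq_div_mul, mul_comm]

lemma getD_eq {p : ℕ} (hp : 1 < p) (n l : ℕ) : (Nat.digits p n).getD l 0 = D p n l := by
  induction l generalizing n with
  | zero =>
    rcases Nat.eq_zero_or_pos n with h | h
    · simp [h, D]
    · rw [Nat.digits_def' hp h]; simp [D]
  | succ l ih =>
    rcases Nat.eq_zero_or_pos n with h | h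
    · simp [h, D]
    · rw [Nat.digits_def' hp h]
      simpa [D_succ] using ih (n / p)

lemma D_lt {p : ℕ} (hp : 1 < p) (n l : ℕ) : D p n l < p := Nat.mod_lt _ (by omega)

lemma D_eq_zero {p : ℕ} (n l : ℕ) (h : n < p ^ l) : D p n l = 0 := by
  simp [D, Nat.div_eq_of_lt h]

lemma sum_D {p : ℕ} (hp : 1 < p) {n L : ℕ} (h : n < p ^ L) :
    ∑ l ∈ range L, D p n l * p ^ l = n := by
  induction L generalizing n with
  | zero =>
    have : n = 0 := by simpa using h
    simp [this]
  | succ L ih =>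
    have hdiv : n / p < p ^ L := by
      rw [Nat.div_lt_iff_lt_mul (by omega)]
      calc n < p ^ (L + 1) := h
        _ = p ^ L * p := pow_succ p L
    rw [Finset.sum_range_succ']
    have : ∀ i, D p n (i + 1) * p ^ (i + 1) = p * (D p (n / p) i * p ^ i) := by
      intro i; rw [D_succ]; ring
    rw [Finset.sum_congr rfl fun i _ => this i, ← Finset.mul_sum, ih hdiv]
    simp only [D, pow_zero, Nat.div_one, mul_one]
    exact Nat.div_add_mod n p

lemma sum_split (p : ℕ) (d : ℕ → ℕ) (L : ℕ) :
    ∑ j ∈ range (L + 1), d j * p ^ j = d 0 + p * ∑ j ∈ range L, d (j + 1) * p ^ j := by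
  rw [Finset.sum_range_succ', pow_zero, mul_one, add_comm]
  congr 1
  rw [Finset.mul_sum]
  exact Finset.sum_congr rfl fun j _ => by ring

lemma D_sum_eq {p : ℕ} (hp : 1 < p) {L l : ℕ} (d : ℕ → ℕ) (hd : ∀ j, j < L → d j < p)
    (hl : l < L) : D p (∑ j ∈ range L, d j * p ^ j) l = d l := by
  induction l generalizing d L with
  | zero =>
    obtain ⟨L, rfl⟩ : ∃ L', L = L' + 1 := ⟨L - 1, by omega⟩
    rw [sum_split]
    simp only [D, pow_zero, Nat.div_one]
    rw [Nat.add_mul_mod_self_left, Nat.mod_eq_of_lt (hd 0 (by omega))]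
  | succ l ih =>
    obtain ⟨L, rfl⟩ : ∃ L', L = L' + 1 := ⟨L - 1, by omega⟩
    rw [sum_split, D_succ]
    have : (d 0 + p * ∑ j ∈ range L, d (j + 1) * p ^ j) / p
        = ∑ j ∈ range L, d (j + 1) * p ^ j := by
      rw [Nat.add_mul_div_left _ _ (by omega : 0 < p),
        Nat.div_eq_of_lt (hd 0 (by omega))]
      omega
    rw [this]
    exact ih (fun j => d (j + 1)) (fun j hj => hd (j + 1) (by omega)) (by omega)

lemma multinomial_map {α β : Type*} (emb : α ↪ β) (s : Finset α) (f : β → ℕ) :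
    Nat.multinomial (s.map emb) f = Nat.multinomial s (f ∘ emb) := by
  simp [Nat.multinomial, Finset.sum_map, Finset.prod_map, Function.comp]

lemma multinomial_fin_succ (m : ℕ) (e : Fin (m + 1) → ℕ) :
    Nat.multinomial univ e =
      (e (Fin.last m) + ∑ i : Fin m, e i.castSucc).choose (e (Fin.last m)) *
        Nat.multinomial univ (fun i : Fin m => e i.castSucc) := by
  rw [Fin.univ_castSuccEmb, Nat.multinomial_cons, Finset.sum_map, multinomial_map]
  rfl

lemma multinomial_zero_fun {α : Type*} (s : Finset α) :
    Nat.multinomial s (fun _ => 0) = 1 := by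
  simp [Nat.multinomial]

theorem main {p : ℕ} (hp : p.Prime) (m : ℕ) (e : Fin (m + 1) → ℕ) (t : ℕ)
    (hsum : ∑ i, e i = t) :
    Nat.multinomial univ e ≡
      ∏ l ∈ range (t + 1),
        (if (∑ i, D p (e i) l) = D p t l then
          Nat.multinomial univ (fun i => D p (e i) l) else 0) [MOD p] := by
  have hp1 : 1 < p := hp.one_lt
  induction m generalizing t with
  | zero =>
    have h0 : t = e 0 := by simpa [Fin.sum_univ_one] using hsum.symm
    have hcond : ∀ l, (∑ i : Fin 1, D p (e i) l) = D p t l := by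
      intro l; simp [Fin.sum_univ_one, h0]
    have h1 : Nat.multinomial (univ : Finset (Fin 1)) e = 1 := by
      rw [Finset.univ_unique, Nat.multinomial_singleton]
    have h2 : ∀ l ∈ range (t + 1), (if (∑ i : Fin 1, D p (e i) l) = D p t l then
          Nat.multinomial univ (fun i : Fin 1 => D p (e i) l) else 0) = 1 := by
      intro l _
      rw [if_pos (hcond l), Finset.univ_unique, Nat.multinomial_singleton]
    rw [h1, Finset.prod_congr rfl h2, Finset.prod_const_one]
  | succ m ih =>
    haveI : Fact p.Prime := ⟨hp⟩
    obtain ⟨E, k, rfl⟩ : ∃ E k, e = Fin.snoc E k :=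
      ⟨Fin.init e, e (Fin.last (m + 1)), (Fin.snoc_init_self e).symm⟩
    have hsnoc : ∀ (f : Fin (m + 2) → ℕ), (∑ i, f i) = (∑ i : Fin (m + 1), f i.castSucc) + f (Fin.last (m + 1)) :=
      fun f => Fin.sum_univ_castSucc f
    have htk : (∑ i, E i) + k = t := by
      rw [← hsum, hsnoc]
      simp [Fin.snoc_castSucc, Fin.snoc_last]
    set t' : ℕ := ∑ i, E i with ht'
    have hkt : k ≤ t := by omega
    have ht't : t' ≤ t := by omega
    have hE_le : ∀ i, E i ≤ t' := fun i =>
      Finset.single_le_sum (fun i _ => Nat.zero_le _) (mem_univ i)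
    have hlt : ∀ n, n ≤ t → n < p ^ (t + 1) := fun n h =>
      lt_of_le_of_lt h (lt_of_lt_of_le (Nat.lt_pow_self (n := t) hp1)
        (Nat.pow_le_pow_right hp1.le (by omega)))
    have hbig : ∀ n l, n ≤ t' → t' + 1 ≤ l → D p n l = 0 := fun n l hn hl =>
      D_eq_zero _ _ (lt_of_le_of_lt hn (lt_of_lt_of_le (Nat.lt_pow_self (n := t') hp1)
        (Nat.pow_le_pow_right hp1.le (by omega))))
    -- decomposition of the multinomial coefficient
    have hde : Nat.multinomial univ (Fin.snoc E k : Fin (m + 2) → ℕ)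
        = t.choose k * Nat.multinomial univ E := by
      rw [multinomial_fin_succ (m + 1) (Fin.snoc E k)]
      simp only [Fin.snoc_castSucc, Fin.snoc_last]
      rw [← ht', add_comm k t', htk]
    -- induction hypothesis
    have hih := ih E t' rfl
    -- extend range of the IH product
    have hext : (∏ l ∈ range (t' + 1),
          (if (∑ i, D p (E i) l) = D p t' l then
            Nat.multinomial univ (fun i => D p (E i) l) else 0))
        = ∏ l ∈ range (t + 1),
          (if (∑ i, D p (E i) l) = D p t' l then
            Nat.multinomial univ (fun i => D p (E i) l) else 0) := by
      apply Finset.prod_subset (Finset.range_subset_range.mpr (by omega))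
      intro l _ hl
      have hll : t' + 1 ≤ l := by
        rcases Nat.lt_or_ge l (t' + 1) with h | h
        · exact absurd (Finset.mem_range.mpr h) hl
        · exact h
      have h1 : ∀ i : Fin (m + 1), D p (E i) l = 0 := fun i => hbig _ _ (hE_le i) hll
      have hc : (∑ i, D p (E i) l) = D p t' l := by
        rw [hbig t' l le_rfl hll]
        simp [h1]
      rw [if_pos hc]
      calc Nat.multinomial univ (fun i => D p (E i) l)
          = Nat.multinomial univ (fun _ : Fin (m + 1) => 0) :=
            Nat.multinomial_congr (fun i _ => h1 i)
        _ = 1 := multinomial_zero_fun _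
    -- Lucas' theorem for the binomial coefficient
    have lucas : t.choose k ≡ ∏ l ∈ range (t + 1), Nat.choose (D p t l) (D p k l) [MOD p] :=
      Choose.choose_modEq_prod_range_choose_nat (hlt t le_rfl) (hlt k hkt)
    have step1 : Nat.multinomial univ (Fin.snoc E k : Fin (m + 2) → ℕ) ≡
        ∏ l ∈ range (t + 1), (Nat.choose (D p t l) (D p k l) *
          (if (∑ i, D p (E i) l) = D p t' l then
            Nat.multinomial univ (fun i => D p (E i) l) else 0)) [MOD p] := by
      rw [hde, Finset.prod_mul_distrib]
      exact Nat.ModEq.mul lucas (hext ▸ hih)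
    refine step1.trans ?_
    have hsp : ∀ l, (∑ i : Fin (m + 2), D p ((Fin.snoc E k : Fin (m + 2) → ℕ) i) l)
        = (∑ i : Fin (m + 1), D p (E i) l) + D p k l := by
      intro l
      rw [hsnoc (fun i => D p ((Fin.snoc E k : Fin (m + 2) → ℕ) i) l)]
      simp [Fin.snoc_castSucc, Fin.snoc_last]
    by_cases hC : ∀ l, l < t + 1 → D p t' l + D p k l = D p t l
    · -- no carries: the products agree termwise
      have heq : ∀ l ∈ range (t + 1), Nat.choose (D p t l) (D p k l) *
            (if (∑ i, D p (E i) l) = D p t' l then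
              Nat.multinomial univ (fun i => D p (E i) l) else 0)
          = (if (∑ i, D p ((Fin.snoc E k : Fin (m + 2) → ℕ) i) l) = D p t l then
              Nat.multinomial univ (fun i : Fin (m + 2) => D p ((Fin.snoc E k : Fin (m + 2) → ℕ) i) l) else 0) := by
        intro l hl
        rw [Finset.mem_range] at hl
        by_cases hA' : (∑ i, D p (E i) l) = D p t' l
        · have hA : (∑ i, D p ((Fin.snoc E k : Fin (m + 2) → ℕ) i) l) = D p t l := by
            rw [hsp, hA', hC l hl]
          rw [if_pos hA', if_pos hA,
            multinomial_fin_succ (m + 1) (fun i => D p ((Fin.snoc E k : Fin (m + 2) → ℕ) i) l)]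
          simp only [Fin.snoc_castSucc, Fin.snoc_last]
          rw [hA', add_comm (D p k l), hC l hl]
        · have hA : ¬ (∑ i, D p ((Fin.snoc E k : Fin (m + 2) → ℕ) i) l) = D p t l := by
            rw [hsp]
            intro h
            exact hA' (by have := hC l hl; omega)
          rw [if_neg hA', if_neg hA, mul_zero]
      rw [Finset.prod_congr rfl heq]
    · -- a carry occurs: both sides are 0
      push_neg at hC
      obtain ⟨l₀, hl₀, hne⟩ := hC
      have hex1 : ∃ l1, l1 < t + 1 ∧ D p t l1 < D p k l1 := by
        by_contra hno
        push_neg at hno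
        have hsub : ∑ l ∈ range (t + 1), (D p t l - D p k l) * p ^ l = t' := by
          have h1 : ∑ l ∈ range (t + 1), (D p t l - D p k l) * p ^ l
              + ∑ l ∈ range (t + 1), D p k l * p ^ l
              = ∑ l ∈ range (t + 1), D p t l * p ^ l := by
            rw [← Finset.sum_add_distrib]
            refine Finset.sum_congr rfl fun l hl => ?_
            rw [Finset.mem_range] at hl
            rw [← add_mul, Nat.sub_add_cancel (hno l hl)]
          rw [sum_D hp1 (hlt k hkt), sum_D hp1 (hlt t le_rfl)] at h1
          omega
        have hD := D_sum_eq hp1 (fun l => D p t l - D p k l)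
          (fun j _ => lt_of_le_of_lt (Nat.sub_le _ _) (D_lt hp1 t j)) hl₀
        rw [hsub] at hD
        beta_reduce at hD
        have := hno l₀ hl₀
        exact hne (by omega)
      obtain ⟨l1, hl1, hlt1⟩ := hex1
      have hP1 : (∏ l ∈ range (t + 1), (Nat.choose (D p t l) (D p k l) *
          (if (∑ i, D p (E i) l) = D p t' l then
            Nat.multinomial univ (fun i => D p (E i) l) else 0))) = 0 :=
        Finset.prod_eq_zero (Finset.mem_range.mpr hl1)
          (by rw [Nat.choose_eq_zero_of_lt hlt1, zero_mul])
      have hex2 : ∃ l2, l2 < t + 1 ∧ ¬ (∑ i, D p ((Fin.snoc E k : Fin (m + 2) → ℕ) i) l2) = D p t l2 := by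
        by_contra hno
        push_neg at hno
        have hdlt : ∀ j, j < t + 1 → (∑ i : Fin (m + 1), D p (E i) j) < p := by
          intro j hj
          have h1 := hno j hj
          rw [hsp j] at h1
          have h2 := D_lt hp1 t j
          omega
        have hsum2 : ∑ l ∈ range (t + 1), (∑ i : Fin (m + 1), D p (E i) l) * p ^ l = t' := by
          calc ∑ l ∈ range (t + 1), (∑ i : Fin (m + 1), D p (E i) l) * p ^ l
              = ∑ l ∈ range (t + 1), ∑ i : Fin (m + 1), D p (E i) l * p ^ l := by
                exact Finset.sum_congr rfl fun l _ => by rw [Finset.sum_mul]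
            _ = ∑ i : Fin (m + 1), ∑ l ∈ range (t + 1), D p (E i) l * p ^ l :=
                Finset.sum_comm
            _ = ∑ i : Fin (m + 1), E i :=
                Finset.sum_congr rfl fun i _ => sum_D hp1 (hlt (E i) (le_trans (hE_le i) ht't))
        have hD := D_sum_eq hp1 (fun l => ∑ i : Fin (m + 1), D p (E i) l) hdlt hl₀
        rw [hsum2] at hD
        beta_reduce at hD
        apply hne
        rw [hD, ← hsp l₀]
        exact hno l₀ hl₀
      obtain ⟨l2, hl2, hA2⟩ := hex2
      have hP2 : (∏ l ∈ range (t + 1),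
          (if (∑ i, D p ((Fin.snoc E k : Fin (m + 2) → ℕ) i) l) = D p t l then
            Nat.multinomial univ (fun i : Fin (m + 2) => D p ((Fin.snoc E k : Fin (m + 2) → ℕ) i) l) else 0)) = 0 :=
        Finset.prod_eq_zero (Finset.mem_range.mpr hl2) (if_neg hA2)
      rw [hP1, hP2]

end Stmt2Aux

/-- Generalized Lucas theorem for multinomial coefficients: the multinomial coefficient
is congruent mod p to the product of digitwise multinomial coefficients, where a digitwise
coefficient whose digit sum differs from the corresponding digit of t counts as 0. -/
theorem stmt2 (p : ℕ) (hp : p.Prime) (t m : ℕ) (ht : 0 < t)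
    (e : Fin (m + 1) → ℕ) (hsum : ∑ i, e i = t) :
    Nat.multinomial Finset.univ e ≡
      (∏ l ∈ Finset.range (t + 1),
        if (∑ i, (Nat.digits p (e i)).getD l 0) = (Nat.digits p t).getD l 0 then
          Nat.multinomial Finset.univ (fun i => (Nat.digits p (e i)).getD l 0)
        else 0) [MOD p] := by
  simp only [Stmt2Aux.getD_eq hp.one_lt]
  exact Stmt2Aux.main hp m e t hsum
end

section
/- Let F be a field of characteristic p > 0 with |F| ≥ t, let V be an (m+1)-dimensional F-vector space, and let t = Σ_λ t_λ p^λ be the base-p representation of t. Then the subspace of the t-th symmetric power Sym^t(V) spanned by the set of powers {a^t : a ∈ V} has dimension Π_λ C(m + t_λ, t_λ). -/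
open Finset

section Arith

variable {p : ℕ}

lemma digitD (hx : True) (x l : ℕ) : x % p ^ (l + 1) = x % p ^ l + p ^ l * (x / p ^ l % p) := by
  rw [pow_succ, Nat.mod_mul]

lemma carry_iff (hp : p.Prime) (a b : ℕ) :
    ¬ p ∣ (a + b).choose a ↔ ∀ i, a % p ^ i + b % p ^ i < p ^ i := by
  classical
  set B := Nat.log p (a + b) + 1 with hB
  have h := Nat.Prime.emultiplicity_choose' (p := p) (n := b) (k := a) hp
    (b := B) (by rw [add_comm b a]; exact Nat.lt_succ_self _)
  rw [add_comm b a] at h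
  rw [← emultiplicity_eq_zero, h]
  rw [show ((0 : ℕ∞) = ((0 : ℕ) : ℕ∞)) from rfl, Nat.cast_inj, Finset.card_eq_zero,
    Finset.filter_eq_empty_iff]
  constructor
  · intro hall i
    rcases Nat.eq_zero_or_pos i with rfl | hi
    · simp [Nat.mod_one]
    rcases lt_or_ge i B with hiB | hiB
    · have := hall (Finset.mem_Ico.mpr ⟨hi, hiB⟩)
      omega
    · have h1 : a % p ^ i ≤ a := Nat.mod_le _ _
      have h2 : b % p ^ i ≤ b := Nat.mod_le _ _
      have h3 : a + b < p ^ B := Nat.lt_pow_succ_log_self hp.one_lt _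
      have h4 : p ^ B ≤ p ^ i := Nat.pow_le_pow_right hp.pos hiB
      omega
  · intro hall i _
    exact not_le.mpr (hall i)

lemma carry_iff' (hp : p.Prime) (a b : ℕ) :
    ¬ p ∣ (a + b).choose a ↔ ∀ i, (a + b) % p ^ i = a % p ^ i + b % p ^ i := by
  rw [carry_iff hp]
  have hpos : ∀ i : ℕ, 0 < p ^ i := fun i => Nat.pow_pos (n := i) hp.pos
  constructor
  · intro h i
    rw [Nat.add_mod, Nat.mod_eq_of_lt (h i)]
  · intro h i
    rw [← h i]
    exact Nat.mod_lt _ (hpos i)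

lemma kummer_multi (hp : p.Prime) {ι : Type*} [DecidableEq ι] (s : Finset ι) (f : ι → ℕ) :
    ¬ p ∣ Nat.multinomial s f ↔ ∀ i, (∑ j ∈ s, f j) % p ^ i = ∑ j ∈ s, f j % p ^ i := by
  induction s using Finset.cons_induction with
  | empty => simp [Nat.multinomial_empty, hp.one_lt.ne']
  | cons a s ha ih =>
    rw [Nat.multinomial_cons, hp.dvd_mul, not_or, ih]
    have hmodle : ∀ i, (∑ j ∈ s, f j) % p ^ i ≤ ∑ j ∈ s, f j % p ^ i := by
      intro i
      rw [Finset.sum_nat_mod]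
      exact Nat.mod_le _ _
    constructor
    · rintro ⟨h1, h2⟩ i
      rw [Finset.sum_cons, Finset.sum_cons, ← h2 i]
      exact (carry_iff' hp _ _).mp h1 i
    · intro h
      have key : ∀ i, (f a + ∑ j ∈ s, f j) % p ^ i = f a % p ^ i + (∑ j ∈ s, f j) % p ^ i
          ∧ (∑ j ∈ s, f j) % p ^ i = ∑ j ∈ s, f j % p ^ i := by
        intro i
        have hi := h i
        rw [Finset.sum_cons, Finset.sum_cons] at hi
        have e1 : (f a + ∑ j ∈ s, f j) % p ^ i
            = (f a % p ^ i + (∑ j ∈ s, f j) % p ^ i) % p ^ i := Nat.add_mod _ _ _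
        have e2 : (f a % p ^ i + (∑ j ∈ s, f j) % p ^ i) % p ^ i
            ≤ f a % p ^ i + (∑ j ∈ s, f j) % p ^ i := Nat.mod_le _ _
        have e3 := hmodle i
        omega
      exact ⟨(carry_iff' hp _ _).mpr fun i => (key i).1, fun i => (key i).2⟩

lemma modform_iff_digitform (hp1 : 1 < p) {ι : Type*} (s : Finset ι) (f : ι → ℕ) :
    (∀ i, (∑ j ∈ s, f j) % p ^ i = ∑ j ∈ s, f j % p ^ i) ↔
      (∀ l, ∑ j ∈ s, f j / p ^ l % p = (∑ j ∈ s, f j) / p ^ l % p) := by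
  have hpos : ∀ i : ℕ, 0 < p ^ i := fun i => Nat.pow_pos (n := i) (by omega)
  constructor
  · intro h l
    have h1 := h l
    have h2 := h (l + 1)
    rw [digitD trivial] at h2
    have h3 : ∀ j ∈ s, f j % p ^ (l+1) = f j % p ^ l + p ^ l * (f j / p ^ l % p) :=
      fun j _ => digitD trivial _ _
    rw [Finset.sum_congr rfl h3, Finset.sum_add_distrib, ← Finset.mul_sum, ← h1] at h2
    have := Nat.add_left_cancel h2
    exact (Nat.eq_of_mul_eq_mul_left (hpos l) this).symm
  · intro h i
    induction i with
    | zero => simp [Nat.mod_one]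
    | succ i ih =>
      rw [digitD trivial, ih, ← h i, Finset.mul_sum, ← Finset.sum_add_distrib]
      exact Finset.sum_congr rfl fun j _ => (digitD trivial _ _).symm

lemma not_dvd_multinomial_iff_s8 (hp : p.Prime) {ι : Type*} [DecidableEq ι] (s : Finset ι)
    (f : ι → ℕ) :
    ¬ p ∣ Nat.multinomial s f ↔
      ∀ l, ∑ j ∈ s, f j / p ^ l % p = (∑ j ∈ s, f j) / p ^ l % p := by
  rw [kummer_multi hp, modform_iff_digitform hp.one_lt]

end Arith

open Finset

variable {p : ℕ}

lemma digitD' (x l : ℕ) : x % p ^ (l + 1) = x % p ^ l + p ^ l * (x / p ^ l % p) := by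
  rw [pow_succ, Nat.mod_mul]

lemma sum_digits_mod (x : ℕ) : ∀ L, ∑ l ∈ Finset.range L, x / p ^ l % p * p ^ l = x % p ^ L := by
  intro L
  induction L with
  | zero => simp [Nat.mod_one]
  | succ L ih => rw [Finset.sum_range_succ, ih, digitD' x L, mul_comm]

lemma recon_lt (hp1 : 1 < p) (L : ℕ) (c : ℕ → ℕ) (hc : ∀ l, l < L → c l < p) :
    ∑ l ∈ Finset.range L, c l * p ^ l < p ^ L := by
  induction L with
  | zero => simp
  | succ L ih =>
    have h1 : ∑ l ∈ Finset.range L, c l * p ^ l < p ^ L :=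
      ih (fun l hl => hc l (by omega))
    have h2 : c L + 1 ≤ p := hc L (by omega)
    calc ∑ l ∈ Finset.range (L + 1), c l * p ^ l
        = ∑ l ∈ Finset.range L, c l * p ^ l + c L * p ^ L := Finset.sum_range_succ _ _
      _ < p ^ L + c L * p ^ L := by omega
      _ = (c L + 1) * p ^ L := by ring
      _ ≤ p * p ^ L := Nat.mul_le_mul_right _ h2
      _ = p ^ (L + 1) := by ring

lemma recon_digit (hp1 : 1 < p) (L k : ℕ) (c : ℕ → ℕ) (hc : ∀ l, l < L → c l < p)
    (hk : k < L) :
    (∑ l ∈ Finset.range L, c l * p ^ l) / p ^ k % p = c k := by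
  have hsplit : ∑ l ∈ Finset.range L, c l * p ^ l
      = ∑ l ∈ Finset.range (k+1), c l * p ^ l + ∑ l ∈ Finset.Ico (k+1) L, c l * p ^ l := by
    rw [Finset.sum_range_add_sum_Ico _ (by omega : k + 1 ≤ L)]
  have hB : ∑ l ∈ Finset.Ico (k+1) L, c l * p ^ l
      = p ^ (k+1) * ∑ l ∈ Finset.Ico (k+1) L, c l * p ^ (l - (k+1)) := by
    rw [Finset.mul_sum]
    refine Finset.sum_congr rfl fun l hl => ?_
    have hl' : k + 1 ≤ l := (Finset.mem_Ico.mp hl).1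
    rw [show p ^ l = p ^ (k+1) * p ^ (l - (k+1)) by rw [← pow_add]; congr 1; omega]
    ring
  set B := ∑ l ∈ Finset.Ico (k+1) L, c l * p ^ (l - (k+1)) with hBdef
  set A := ∑ l ∈ Finset.range k, c l * p ^ l with hAdef
  have hA : A < p ^ k := recon_lt hp1 k c (fun l hl => hc l (by omega))
  have hx : ∑ l ∈ Finset.range L, c l * p ^ l = A + p ^ k * (c k + p * B) := by
    rw [hsplit, hB, Finset.sum_range_succ]
    ring
  rw [hx, Nat.add_mul_div_left _ _ (by positivity : 0 < p ^ k), Nat.div_eq_of_lt hA,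
    zero_add, Nat.add_mul_mod_self_left, Nat.mod_eq_of_lt (hc k hk)]

lemma digits_getD (hp1 : 1 < p) : ∀ (l t : ℕ), (Nat.digits p t).getD l 0 = t / p ^ l % p := by
  intro l
  induction l with
  | zero =>
    intro t
    rcases Nat.eq_zero_or_pos t with rfl | ht
    · simp
    · rw [Nat.digits_def' hp1 ht]
      simp
  | succ l ih =>
    intro t
    rcases Nat.eq_zero_or_pos t with rfl | ht
    · simp
    · rw [Nat.digits_def' hp1 ht]
      show (Nat.digits p (t / p)).getD l 0 = _
      rw [ih (t / p), Nat.div_div_eq_div_mul, ← pow_succ']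

open Finset

lemma card_piAntidiag_univ (n c : ℕ) :
    (Finset.piAntidiag (Finset.univ : Finset (Fin (n+1))) c).card = (n + c).choose c := by
  rw [← Finset.map_sym_eq_piAntidiag, Finset.card_map, Finset.sym_univ, Finset.card_univ,
    Sym.card_sym_eq_choose]
  congr 1
  simp [Fintype.card_fin]

lemma card_filter_multinomial {p : ℕ} (hp : p.Prime) (m t : ℕ) :
    ((Finset.piAntidiag (Finset.univ : Finset (Fin (m+1))) t).filter
      (fun α => ¬ p ∣ Nat.multinomial Finset.univ α)).card
    = ∏ l ∈ Finset.range (t+1), (m + t / p ^ l % p).choose (t / p ^ l % p) := by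
  classical
  have hp1 : 1 < p := hp.one_lt
  have htlt : t < p ^ (t + 1) := by
    calc t < 2 ^ t := Nat.lt_two_pow_self
      _ ≤ p ^ t := Nat.pow_le_pow_left hp.two_le t
      _ ≤ p ^ (t + 1) := Nat.pow_le_pow_right hp.pos (Nat.le_succ t)
  have hT : ∏ l ∈ Finset.range (t+1), (m + t / p ^ l % p).choose (t / p ^ l % p)
      = (Fintype.piFinset fun l : Fin (t+1) =>
          Finset.piAntidiag (Finset.univ : Finset (Fin (m+1))) (t / p ^ (l:ℕ) % p)).card := by
    rw [Fintype.card_piFinset]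
    rw [← Fin.prod_univ_eq_prod_range (fun l => (m + t / p ^ l % p).choose (t / p ^ l % p)) (t+1)]
    exact Finset.prod_congr rfl fun l _ => (card_piAntidiag_univ m _).symm
  rw [hT]
  set T := Fintype.piFinset fun l : Fin (t+1) =>
    Finset.piAntidiag (Finset.univ : Finset (Fin (m+1))) (t / p ^ (l:ℕ) % p) with hTdef
  set cf : (Fin (t+1) → Fin (m+1) → ℕ) → Fin (m+1) → ℕ → ℕ :=
    fun e jj l => if h : l < t+1 then e ⟨l,h⟩ jj else 0 with hcfdef
  have hconv : ∀ e jj, (∑ l : Fin (t+1), e l jj * p ^ (l:ℕ))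
      = ∑ l ∈ Finset.range (t+1), cf e jj l * p ^ l := by
    intro e jj
    rw [← Fin.sum_univ_eq_sum_range (fun l => cf e jj l * p ^ l) (t+1)]
    exact Finset.sum_congr rfl fun l _ => by simp [hcfdef, l.isLt, Nat.not_lt.mpr (Nat.le_of_lt_succ l.isLt)]
  have hesum : ∀ e, e ∈ T → ∀ l : Fin (t+1), (∑ jj, e l jj) = t / p ^ (l:ℕ) % p :=
    fun e he l => ((Finset.mem_piAntidiag).mp (Fintype.mem_piFinset.mp he l)).1
  have hclt : ∀ e, e ∈ T → ∀ jj l, cf e jj l < p := by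
    intro e he jj l
    by_cases h : l < t+1
    · simp only [hcfdef, dif_pos h]
      have h1 : e ⟨l,h⟩ jj ≤ ∑ j', e ⟨l,h⟩ j' :=
        Finset.single_le_sum (fun _ _ => Nat.zero_le _) (Finset.mem_univ jj)
      have h2 : (∑ j', e ⟨l,h⟩ j') = t / p ^ l % p := hesum e he ⟨l, h⟩
      have h3 : t / p ^ l % p < p := Nat.mod_lt _ hp.pos
      omega
    · simp only [hcfdef, dif_neg h]
      exact hp.pos
  have hrecsum : ∀ e, e ∈ T → (∑ jj, (∑ l : Fin (t+1), e l jj * p ^ (l:ℕ))) = t := by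
    intro e he
    rw [Finset.sum_comm]
    calc ∑ l : Fin (t+1), ∑ jj, e l jj * p ^ (l:ℕ)
        = ∑ l : Fin (t+1), (t / p ^ (l:ℕ) % p) * p ^ (l:ℕ) := by
          refine Finset.sum_congr rfl fun l _ => ?_
          rw [← Finset.sum_mul, hesum e he l]
      _ = ∑ l ∈ Finset.range (t+1), t / p ^ l % p * p ^ l :=
          Fin.sum_univ_eq_sum_range (fun l => t / p ^ l % p * p ^ l) (t+1)
      _ = t % p ^ (t+1) := sum_digits_mod t (t+1)
      _ = t := Nat.mod_eq_of_lt htlt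
  have hrecdig : ∀ e, e ∈ T → ∀ jj (l : Fin (t+1)),
      (∑ l' : Fin (t+1), e l' jj * p ^ (l':ℕ)) / p ^ (l:ℕ) % p = e l jj := by
    intro e he jj l
    rw [hconv e jj, recon_digit hp.one_lt (t+1) (l:ℕ) _ (fun l' hl' => hclt e he jj l') l.isLt]
    simp [hcfdef, l.isLt, Nat.not_lt.mpr (Nat.le_of_lt_succ l.isLt)]
  have hS : ∀ α ∈ (Finset.piAntidiag (Finset.univ : Finset (Fin (m+1))) t).filter
      (fun α => ¬ p ∣ Nat.multinomial Finset.univ α),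
      (∑ jj, α jj) = t ∧ ∀ l, (∑ jj, α jj / p ^ l % p) = t / p ^ l % p := by
    intro α hα
    rw [Finset.mem_filter, Finset.mem_piAntidiag] at hα
    obtain ⟨⟨hsum, -⟩, hdvd⟩ := hα
    have hd := (not_dvd_multinomial_iff_s8 hp Finset.univ α).mp hdvd
    rw [hsum] at hd
    exact ⟨hsum, hd⟩
  refine Finset.card_bij'
    (fun α _ => fun (l : Fin (t+1)) (jj : Fin (m+1)) => α jj / p ^ (l:ℕ) % p)
    (fun e _ => fun jj => ∑ l : Fin (t+1), e l jj * p ^ (l:ℕ)) ?_ ?_ ?_ ?_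
  · intro α hα
    exact Fintype.mem_piFinset.mpr fun l => Finset.mem_piAntidiag.mpr
      ⟨(hS α hα).2 (l:ℕ), fun i _ => Finset.mem_univ i⟩
  · intro e he
    refine Finset.mem_filter.mpr ⟨Finset.mem_piAntidiag.mpr
      ⟨hrecsum e he, fun i _ => Finset.mem_univ i⟩, ?_⟩
    rw [not_dvd_multinomial_iff_s8 hp]
    intro l
    rw [hrecsum e he]
    by_cases h : l < t + 1
    · calc (∑ jj, (∑ l' : Fin (t+1), e l' jj * p ^ (l':ℕ)) / p ^ l % p)
          = ∑ jj, e ⟨l, h⟩ jj := Finset.sum_congr rfl fun jj _ => hrecdig e he jj ⟨l, h⟩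
        _ = t / p ^ l % p := hesum e he ⟨l, h⟩
    · have hple : p ^ (t+1) ≤ p ^ l := Nat.pow_le_pow_right hp.pos (by omega)
      have hzero : ∀ jj : Fin (m+1), (∑ l' : Fin (t+1), e l' jj * p ^ (l':ℕ)) / p ^ l = 0 := by
        intro jj
        apply Nat.div_eq_of_lt
        have h1 : (∑ l' : Fin (t+1), e l' jj * p ^ (l':ℕ))
            ≤ ∑ jj', (∑ l' : Fin (t+1), e l' jj' * p ^ (l':ℕ)) :=
          Finset.single_le_sum (f := fun jj' => ∑ l' : Fin (t+1), e l' jj' * p ^ (l':ℕ))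
            (fun _ _ => Nat.zero_le _) (Finset.mem_univ jj)
        rw [hrecsum e he] at h1
        omega
      rw [Nat.div_eq_of_lt (by omega), Nat.zero_mod]
      simp only [hzero, Nat.zero_mod]
      simp
  · intro α hα
    funext jj
    have h1 : α jj ≤ t := by
      have := Finset.single_le_sum (f := α) (fun _ _ => Nat.zero_le _) (Finset.mem_univ jj)
      rw [(hS α hα).1] at this
      exact this
    show (∑ l : Fin (t + 1), α jj / p ^ (l:ℕ) % p * p ^ (l:ℕ)) = α jj
    rw [Fin.sum_univ_eq_sum_range (fun l => α jj / p ^ l % p * p ^ l) (t+1),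
      sum_digits_mod, Nat.mod_eq_of_lt (by omega)]
  · intro e he
    funext l jj
    show (∑ l' : Fin (t + 1), e l' jj * p ^ (l':ℕ)) / p ^ (l:ℕ) % p = e l jj
    exact hrecdig e he jj l

open Finset

lemma interp {F : Type*} [Field F] {M : Type*} [AddCommGroup M] [Module F M]
    (t : ℕ) (hF : (t : Cardinal) ≤ Cardinal.mk F) (g : ℕ → M) (W : Submodule F M)
    (h1 : ∀ c : F, (∑ k ∈ Finset.range (t+1), c ^ k • g k) ∈ W) (h2 : g t ∈ W) :
    ∀ k, k ≤ t → g k ∈ W := by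
  have h1' : ∀ c : F, (∑ k ∈ Finset.range t, c ^ k • g k) ∈ W := by
    intro c
    have h3 := W.sub_mem (h1 c) (W.smul_mem (c ^ t) h2)
    rwa [Finset.sum_range_succ, add_sub_cancel_right] at h3
  obtain ⟨e⟩ : Nonempty (Fin t ↪ F) := by
    rw [← Cardinal.lift_mk_le']
    simpa using hF
  intro k hk
  rcases eq_or_lt_of_le hk with rfl | hk
  · exact h2
  · set V : Matrix (Fin t) (Fin t) F := Matrix.vandermonde (fun i => e i) with hV
    have hdet : IsUnit V.det := by
      rw [isUnit_iff_ne_zero, hV, Matrix.det_vandermonde_ne_zero_iff]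
      exact e.injective
    have hVV : V⁻¹ * V = 1 := Matrix.nonsing_inv_mul V hdet
    set k' : Fin t := ⟨k, hk⟩ with hk'
    have hgk : g k = ∑ i : Fin t, (V⁻¹ k' i) • (∑ k'' : Fin t, V i k'' • g (k'':ℕ)) := by
      have : ∀ i : Fin t, (V⁻¹ k' i) • (∑ k'' : Fin t, V i k'' • g (k'':ℕ))
          = ∑ k'' : Fin t, (V⁻¹ k' i * V i k'') • g (k'':ℕ) := by
        intro i
        rw [Finset.smul_sum]
        exact Finset.sum_congr rfl fun k'' _ => (smul_smul _ _ _)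
      rw [Finset.sum_congr rfl fun i _ => this i, Finset.sum_comm]
      have hcol : ∀ k'' : Fin t, (∑ i : Fin t, (V⁻¹ k' i * V i k'') • g (k'':ℕ))
          = ((V⁻¹ * V) k' k'') • g (k'':ℕ) := by
        intro k''
        rw [Matrix.mul_apply, Finset.sum_smul]
      rw [Finset.sum_congr rfl fun k'' _ => hcol k'', hVV]
      simp only [Matrix.one_apply]
      rw [Finset.sum_eq_single k']
      · simp [hk']
      · intro b _ hb
        simp [Ne.symm hb]
      · simp
    rw [hgk]
    refine W.sum_mem fun i _ => W.smul_mem _ ?_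
    have : (∑ k'' : Fin t, V i k'' • g (k'':ℕ)) = ∑ k'' ∈ Finset.range t, (e i) ^ k'' • g k'' := by
      rw [← Fin.sum_univ_eq_sum_range (fun k'' => (e i) ^ k'' • g k'') t]
      rfl
    rw [this]
    exact h1' (e i)

open Finset MvPolynomial

lemma monomial_mem {F : Type*} [Field F] {n : ℕ}
    (s : Finset (Fin n)) (t : ℕ) (hF : (t : Cardinal) ≤ Cardinal.mk F)
    (α : Fin n → ℕ) (hsum : ∑ i ∈ s, α i = t) (hsupp : ∀ i, α i ≠ 0 → i ∈ s) :
    (Nat.multinomial s α : F) • MvPolynomial.monomial (Finsupp.equivFunOnFinite.symm α) (1:F)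
      ∈ Submodule.span F {f : MvPolynomial (Fin n) F |
          ∃ a : Fin n → F, f = (∑ i ∈ s, MvPolynomial.C (a i) * MvPolynomial.X i) ^ t} := by
  induction s using Finset.cons_induction generalizing t α with
  | empty =>
    have ht0 : 0 = t := by rw [← hsum]; simp
    subst ht0
    have hα : α = fun _ => 0 := by
      funext i
      by_contra h
      exact absurd (hsupp i h) (by simp)
    subst hα
    have h0 : (Finsupp.equivFunOnFinite.symm (fun _ => (0:ℕ) : Fin n → ℕ)) = 0 := by
      ext i
      simp
    rw [h0, Nat.multinomial_empty, Nat.cast_one, one_smul]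
    have h1 : (monomial (0 : Fin n →₀ ℕ) (1:F)) = 1 := by
      rw [← MvPolynomial.C_apply, map_one]
    rw [h1]
    exact Submodule.subset_span ⟨fun _ => 0, by simp⟩
  | cons j s' hj IH =>
    classical
    set k := α j with hkdef
    set t' := ∑ i ∈ s', α i with ht'def
    have htk : t = k + t' := by rw [← hsum, Finset.sum_cons]
    set α' := Function.update α j 0 with hα'def
    have hne : ∀ i ∈ s', i ≠ j := fun i hi => ne_of_mem_of_not_mem hi hj
    have hsum' : ∑ i ∈ s', α' i = t' :=
      Finset.sum_congr rfl fun i hi => Function.update_of_ne (hne i hi) _ _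
    have hsupp' : ∀ i, α' i ≠ 0 → i ∈ s' := by
      intro i hi
      by_cases h : i = j
      · subst h
        simp [hα'def] at hi
      · rw [hα'def, Function.update_of_ne h] at hi
        rcases Finset.mem_cons.mp (hsupp i hi) with h' | h'
        · exact absurd h' h
        · exact h'
    have hF' : (t' : Cardinal) ≤ Cardinal.mk F :=
      le_trans (by exact_mod_cast Nat.cast_le.mpr (by omega : t' ≤ t)) hF
    have hIH := IH t' hF' α' hsum' hsupp'
    set W := Submodule.span F {f : MvPolynomial (Fin n) F |
      ∃ a : Fin n → F, f = (∑ i ∈ Finset.cons j s' hj, MvPolynomial.C (a i) * MvPolynomial.X i) ^ t}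
      with hWdef
    -- X j ^ t ∈ W
    have hXj : (X j : MvPolynomial (Fin n) F) ^ t ∈ W := by
      refine Submodule.subset_span ⟨fun i => if i = j then 1 else 0, ?_⟩
      rw [Finset.sum_cons]
      have h2 : (∑ i ∈ s', C (if i = j then (1:F) else 0) * X i) = 0 :=
        Finset.sum_eq_zero fun i hi => by rw [if_neg (hne i hi)]; simp
      rw [h2]
      simp
    -- the interpolation step
    have hg : ∀ (a : Fin n → F) (k'' : ℕ), k'' ≤ t →
        (t.choose k'' : F) • ((X j : MvPolynomial (Fin n) F) ^ k''
          * (∑ i ∈ s', C (a i) * X i) ^ (t - k'')) ∈ W := by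
      intro a
      refine interp t hF
        (fun k'' => (t.choose k'' : F) • ((X j : MvPolynomial (Fin n) F) ^ k''
          * (∑ i ∈ s', C (a i) * X i) ^ (t - k''))) W ?_ ?_
      · intro c
        have hexp : (∑ k'' ∈ Finset.range (t+1), c ^ k'' • ((t.choose k'' : F) •
            ((X j : MvPolynomial (Fin n) F) ^ k'' * (∑ i ∈ s', C (a i) * X i) ^ (t - k''))))
            = (C c * X j + (∑ i ∈ s', C (a i) * X i)) ^ t := by
          rw [add_pow]
          refine Finset.sum_congr rfl fun k'' _ => ?_
          rw [smul_smul, smul_eq_C_mul, map_mul, map_pow, mul_pow, ← C_eq_coe_nat]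
          ring
        rw [hexp]
        refine Submodule.subset_span ⟨Function.update a j c, ?_⟩
        rw [Finset.sum_cons, Function.update_self]
        congr 2
        exact (Finset.sum_congr rfl fun i hi => by rw [Function.update_of_ne (hne i hi)]).symm
      · show (t.choose t : F) • ((X j : MvPolynomial (Fin n) F) ^ t
            * (∑ i ∈ s', C (a i) * X i) ^ (t - t)) ∈ W
        rw [Nat.choose_self, Nat.cast_one, one_smul, Nat.sub_self, pow_zero, mul_one]
        exact hXj
    -- the map step
    have hmap : ∀ v ∈ Submodule.span F {f : MvPolynomial (Fin n) F |
        ∃ a : Fin n → F, f = (∑ i ∈ s', MvPolynomial.C (a i) * MvPolynomial.X i) ^ t'},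
        (t.choose k : F) • ((X j : MvPolynomial (Fin n) F) ^ k * v) ∈ W := by
      intro v hv
      induction hv using Submodule.span_induction with
      | mem x hx =>
        obtain ⟨a, rfl⟩ := hx
        have : t - k = t' := by omega
        rw [← this]
        exact hg a k (by omega)
      | zero => rw [mul_zero, smul_zero]; exact W.zero_mem
      | add x y hx hy hx' hy' =>
        rw [mul_add, smul_add]
        exact W.add_mem hx' hy'
      | smul c x hx hx' =>
        rw [mul_smul_comm, smul_comm]
        exact W.smul_mem c hx'
    have hfin := hmap _ hIH
    -- now rewrite the goal element
    have heq : (Nat.multinomial (Finset.cons j s' hj) α : F) •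
        MvPolynomial.monomial (Finsupp.equivFunOnFinite.symm α) (1:F)
        = (t.choose k : F) • ((X j : MvPolynomial (Fin n) F) ^ k *
          ((Nat.multinomial s' α' : F) •
            MvPolynomial.monomial (Finsupp.equivFunOnFinite.symm α') (1:F))) := by
      rw [mul_smul_comm, smul_smul]
      have hsingle : Finsupp.single j k + Finsupp.equivFunOnFinite.symm α'
          = Finsupp.equivFunOnFinite.symm α := by
        ext i
        by_cases h : i = j
        · subst h
          simp [hα'def, hkdef]
        · simp [hα'def, Finsupp.single_eq_of_ne' (Ne.symm h), Function.update_of_ne h]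
      have hmono : (X j : MvPolynomial (Fin n) F) ^ k *
          MvPolynomial.monomial (Finsupp.equivFunOnFinite.symm α') (1:F)
          = MvPolynomial.monomial (Finsupp.equivFunOnFinite.symm α) (1:F) := by
        rw [X_pow_eq_monomial, monomial_mul, one_mul, hsingle]
      rw [hmono]
      have hmc : Nat.multinomial (Finset.cons j s' hj) α = t.choose k * Nat.multinomial s' α' := by
        rw [Nat.multinomial_cons,
          Nat.multinomial_congr (g := α') (fun i hi => (Function.update_of_ne (hne i hi) 0 α).symm)]
        rw [show α j + ∑ i ∈ s', α i = t by omega]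
      rw [hmc]
      push_cast
      ring
    rw [heq]
    exact hfin

open Finset MvPolynomial

section
variable {F : Type*} [Field F] {n : ℕ}

lemma prod_X_pow (k : Fin n → ℕ) :
    (∏ i, (X i : MvPolynomial (Fin n) F) ^ k i)
      = MvPolynomial.monomial (Finsupp.equivFunOnFinite.symm k) (1:F) := by
  calc ∏ i, (X i : MvPolynomial (Fin n) F) ^ k i
      = ∏ i, (X i : MvPolynomial (Fin n) F) ^ ((Finsupp.equivFunOnFinite.symm k) i) :=
        Finset.prod_congr rfl fun x _ => by
          rw [Finsupp.equivFunOnFinite_symm_apply_apply]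
    _ = ∏ x ∈ (Finsupp.equivFunOnFinite.symm k).support,
          (X x : MvPolynomial (Fin n) F) ^ ((Finsupp.equivFunOnFinite.symm k) x) :=
        (Finset.prod_subset (Finset.subset_univ _) (fun x _ hx => by
          rw [Finsupp.notMem_support_iff.mp hx, pow_zero])).symm
    _ = _ := MvPolynomial.prod_X_pow_eq_monomial

lemma span_eq (t : ℕ) (hF : (t : Cardinal) ≤ Cardinal.mk F) :
    Submodule.span F {f : MvPolynomial (Fin n) F | ∃ a : Fin n → F,
        f = (∑ i, MvPolynomial.C (a i) * MvPolynomial.X i) ^ t}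
      = Submodule.span F ((fun α => (Nat.multinomial Finset.univ α : F) •
          MvPolynomial.monomial (Finsupp.equivFunOnFinite.symm α) (1:F)) ''
          ↑(Finset.piAntidiag (Finset.univ : Finset (Fin n)) t)) := by
  apply le_antisymm
  · rw [Submodule.span_le]
    rintro x ⟨a, rfl⟩
    rw [Finset.sum_pow_eq_sum_piAntidiag]
    refine Submodule.sum_mem _ fun k hk => ?_
    have hterm : (Nat.multinomial Finset.univ k : MvPolynomial (Fin n) F) *
        ∏ i, (MvPolynomial.C (a i) * MvPolynomial.X i) ^ k i
        = (∏ i, (a i) ^ k i) • ((Nat.multinomial Finset.univ k : F) •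
            MvPolynomial.monomial (Finsupp.equivFunOnFinite.symm k) (1:F)) := by
      have hp1 : (∏ x, (MvPolynomial.C (a x) * MvPolynomial.X x) ^ k x)
          = MvPolynomial.C (∏ x, a x ^ k x) * ∏ x, (MvPolynomial.X x : MvPolynomial (Fin n) F) ^ k x := by
        rw [map_prod, ← Finset.prod_mul_distrib]
        exact Finset.prod_congr rfl fun x _ => by rw [mul_pow, map_pow]
      rw [← C_eq_coe_nat, hp1, prod_X_pow (F := F) k, C_mul', C_mul']
      exact smul_comm _ _ _
    rw [hterm]
    exact Submodule.smul_mem _ _ (Submodule.subset_span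
      (Set.mem_image_of_mem _ (Finset.mem_coe.mpr hk)))
  · rw [Submodule.span_le]
    rintro x ⟨α, hα, rfl⟩
    rw [Finset.mem_coe, Finset.mem_piAntidiag] at hα
    exact monomial_mem Finset.univ t hF α hα.1 (fun i hi => Finset.mem_univ i)

end


/-- Over a field F of prime characteristic p with |F| ≥ t, the subspace of the t-th
symmetric power of an (m+1)-dimensional space spanned by the t-th powers of vectors has
dimension Π_λ C(m + t_λ, t_λ), where t_λ are the base-p digits of t. The symmetric power
is modelled as the space of polynomials in m+1 variables, a vector with coordinates a
corresponding to the linear form Σ a_i X_i, so that a^t is the t-th power of that form. -/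
theorem stmt8 (p : ℕ) (hp : p.Prime) (F : Type*) [Field F] [CharP F p]
    (t m : ℕ) (ht : 1 ≤ t) (hF : (t : Cardinal) ≤ Cardinal.mk F) :
    Module.finrank F (Submodule.span F
      {f : MvPolynomial (Fin (m + 1)) F |
        ∃ a : Fin (m + 1) → F, f = (∑ i, MvPolynomial.C (a i) * MvPolynomial.X i) ^ t})
      = ∏ l ∈ Finset.range (t + 1),
          (m + (Nat.digits p t).getD l 0).choose ((Nat.digits p t).getD l 0) := by
  classical
  rw [span_eq t hF]
  set S := (Finset.piAntidiag (Finset.univ : Finset (Fin (m+1))) t).filter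
    (fun α => ¬ p ∣ Nat.multinomial Finset.univ α) with hSdef
  set mono : (Fin (m+1) → ℕ) → MvPolynomial (Fin (m+1)) F :=
    fun α => MvPolynomial.monomial (Finsupp.equivFunOnFinite.symm α) (1:F) with hmono
  have hspan2 : Submodule.span F ((fun α => (Nat.multinomial Finset.univ α : F) • mono α) ''
      ↑(Finset.piAntidiag (Finset.univ : Finset (Fin (m+1))) t))
      = Submodule.span F ↑(S.image mono) := by
    apply le_antisymm <;> rw [Submodule.span_le]
    · rintro x ⟨α, hα, rfl⟩
      beta_reduce
      by_cases hdvd : p ∣ Nat.multinomial Finset.univ α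
      · rw [(CharP.cast_eq_zero_iff F p _).mpr hdvd, zero_smul]
        exact Submodule.zero_mem _
      · refine Submodule.smul_mem _ _ (Submodule.subset_span ?_)
        rw [Finset.coe_image]
        refine Set.mem_image_of_mem _ ?_
        rw [Finset.mem_coe, hSdef, Finset.mem_filter]
        exact ⟨Finset.mem_coe.mp hα, hdvd⟩
    · rintro x hx
      rw [Finset.coe_image] at hx
      obtain ⟨α, hα, rfl⟩ := hx
      have hα' := Finset.mem_coe.mp hα
      rw [hSdef, Finset.mem_filter] at hα'
      have hc : (Nat.multinomial Finset.univ α : F) ≠ 0 := by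
        rw [Ne, CharP.cast_eq_zero_iff F p]
        exact hα'.2
      have heq2 : mono α = (Nat.multinomial Finset.univ α : F)⁻¹ •
          ((Nat.multinomial Finset.univ α : F) • mono α) := (inv_smul_smul₀ hc _).symm
      rw [heq2]
      refine Submodule.smul_mem _ _ (Submodule.subset_span ?_)
      exact Set.mem_image_of_mem _ (Finset.mem_coe.mpr hα'.1)
  rw [hspan2]
  have hinj : Function.Injective mono := by
    intro x y hxy
    have h2 := MvPolynomial.monomial_left_injective (one_ne_zero (α := F)) hxy
    exact Finsupp.equivFunOnFinite.symm.injective h2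
  have hli : LinearIndependent F ((↑) : (↑(S.image mono) : Set (MvPolynomial (Fin (m+1)) F)) →
      MvPolynomial (Fin (m+1)) F) := by
    have hsub : (↑(S.image mono) : Set (MvPolynomial (Fin (m+1)) F)) ⊆
        Set.range (fun d : Fin (m+1) →₀ ℕ => MvPolynomial.monomial d (1:F)) := by
      rintro x hx
      rw [Finset.coe_image] at hx
      obtain ⟨α, _, rfl⟩ := hx
      exact ⟨_, rfl⟩
    have hbasis := (linearIndepOn_id_range_iff (MvPolynomial.basisMonomials (Fin (m+1)) F).linearIndependent.injective).mpr (MvPolynomial.basisMonomials (Fin (m+1)) F).linearIndependent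
    rw [MvPolynomial.coe_basisMonomials] at hbasis
    exact hbasis.mono hsub
  rw [finrank_span_finset_eq_card hli, Finset.card_image_of_injective _ hinj]
  rw [hSdef, card_filter_multinomial hp m t]
  exact Finset.prod_congr rfl fun l _ => by rw [digits_getD hp.one_lt l t]
end

section
/- Let p be a prime with t ≥ p and m ≥ 2, and let F be a field of characteristic p with |F| ≥ t. Then the span of {a^t : a ∈ V} in Sym^t(V), where dim V = m+1, is a proper subspace of Sym^t(V); equivalently, the nucleus of the Veronese variety V_m^t is non-empty. -/
open MvPolynomial Finset

/-- Key lemma: if `d` has an index with value `1` and another with value `p - 1`, total degree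
`t ≥ p`, then the `d`-coefficient of any `t`-th power of a linear form vanishes in char `p`. -/
lemma stmt11_aux (p : ℕ) (hp : p.Prime) (F : Type*) [Field F] [CharP F p]
    {n : ℕ} (i0 i1 : Fin n) (h01 : i0 ≠ i1) :
    ∀ t, p ≤ t → ∀ d : Fin n →₀ ℕ, d i0 = 1 → d i1 = p - 1 → (∑ j, d j) = t →
    ∀ a : Fin n → F,
      MvPolynomial.coeff d ((∑ i, MvPolynomial.C (a i) * MvPolynomial.X i) ^ t) = 0 := by
  haveI := Fact.mk hp
  intro t
  induction t using Nat.strong_induction_on with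
  | _ t IH =>
  intro ht d hd0 hd1 hsum a
  have hp2 := hp.two_le
  set ℓ : MvPolynomial (Fin n) F := ∑ i, MvPolynomial.C (a i) * MvPolynomial.X i with hℓ
  have hsplit : ℓ ^ t = (∑ i, monomial (Finsupp.single i p) (a i ^ p)) * ℓ ^ (t - p) := by
    have h1 : (∑ i, monomial (Finsupp.single i p) (a i ^ p)) = ℓ ^ p := by
      rw [hℓ, sum_pow_char]
      refine Finset.sum_congr rfl fun i _ => ?_
      rw [mul_pow, ← C_pow, C_mul_X_pow_eq_monomial]
    rw [h1, ← pow_add, Nat.add_sub_cancel' ht]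
  rw [hsplit, Finset.sum_mul, MvPolynomial.coeff_sum]
  refine Finset.sum_eq_zero fun i _ => ?_
  rw [coeff_monomial_mul']
  split_ifs with hle
  · have hpi : p ≤ d i := by
      have := hle i
      simpa using this
    have hi0 : i ≠ i0 := by rintro rfl; omega
    have hi1 : i ≠ i1 := by rintro rfl; omega
    have h2p : 2 * p ≤ t := by
      have hsub : ∑ j ∈ ({i0, i1, i} : Finset (Fin n)), d j ≤ ∑ j, d j :=
        Finset.sum_le_sum_of_subset (Finset.subset_univ _)
      rw [Finset.sum_insert (by simp [h01, hi0]; tauto),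
        Finset.sum_insert (by simp [hi1]; tauto), Finset.sum_singleton] at hsub
      omega
    have key := IH (t - p) (by omega) (by omega) (d - Finsupp.single i p)
      (by rw [Finsupp.tsub_apply, Finsupp.single_eq_of_ne' hi0, hd0]; simp)
      (by rw [Finsupp.tsub_apply, Finsupp.single_eq_of_ne' hi1, hd1]; simp)
      (by
        have heq : ∀ j ∈ Finset.univ, (Finsupp.single i p) j ≤ d j := fun j _ => hle j
        calc ∑ j, (d - Finsupp.single i p) j
            = ∑ j, (d j - (Finsupp.single i p) j) := by
              exact Finset.sum_congr rfl fun j _ => Finsupp.tsub_apply _ _ _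
          _ = (∑ j, d j) - ∑ j, (Finsupp.single i p) j :=
              Finset.sum_tsub_distrib _ heq
          _ = t - p := by
              rw [hsum]
              congr 1
              simp [Finsupp.single_apply]) a
    rw [key, mul_zero]
  · rfl

/-- For a prime p with t ≥ p, m ≥ 2, and F of characteristic p with |F| ≥ t, the span of
the t-th powers of vectors is a proper subspace of the t-th symmetric power of an
(m+1)-dimensional space (modelled as homogeneous degree-t polynomials); equivalently the
nucleus of the Veronese variety V_m^t is non-empty. -/
theorem stmt11 (p : ℕ) (hp : p.Prime) (t m : ℕ) (ht : p ≤ t) (hm : 2 ≤ m)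
    (F : Type*) [Field F] [CharP F p] (hF : (t : Cardinal) ≤ Cardinal.mk F) :
    Submodule.span F
      {f : MvPolynomial (Fin (m + 1)) F |
        ∃ a : Fin (m + 1) → F, f = (∑ i, MvPolynomial.C (a i) * MvPolynomial.X i) ^ t}
      < MvPolynomial.homogeneousSubmodule (Fin (m + 1)) F t := by
  have hp2 := hp.two_le
  set i0 : Fin (m + 1) := ⟨0, by omega⟩
  set i1 : Fin (m + 1) := ⟨1, by omega⟩
  set i2 : Fin (m + 1) := ⟨2, by omega⟩
  have h01 : i0 ≠ i1 := Fin.ne_of_val_ne (by norm_num)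
  have h02 : i0 ≠ i2 := Fin.ne_of_val_ne (by norm_num)
  have h12 : i1 ≠ i2 := Fin.ne_of_val_ne (by norm_num)
  set d : Fin (m + 1) →₀ ℕ :=
    Finsupp.single i0 1 + Finsupp.single i1 (p - 1) + Finsupp.single i2 (t - p) with hd
  have hd0 : d i0 = 1 := by
    simp [hd, Finsupp.single_apply, h01, h02, h01.symm, h02.symm]
  have hd1 : d i1 = p - 1 := by
    simp [hd, Finsupp.single_apply, h01, h12, h01.symm, h12.symm]
  have hdsum : (∑ j, d j) = t := by
    have hs : ∀ (j : Fin (m + 1)) (c : ℕ), (∑ x, (Finsupp.single j c) x) = c := by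
      intro j c
      simp [Finsupp.single_apply, Finset.sum_ite_eq]
    simp only [hd, Finsupp.add_apply, Finset.sum_add_distrib, hs]
    omega
  have key := stmt11_aux p hp F i0 i1 h01 t ht d hd0 hd1 hdsum
  rw [SetLike.lt_iff_le_and_exists]
  constructor
  · rw [Submodule.span_le]
    rintro f ⟨a, rfl⟩
    rw [SetLike.mem_coe, MvPolynomial.mem_homogeneousSubmodule]
    have : MvPolynomial.IsHomogeneous (∑ i, MvPolynomial.C (a i) * MvPolynomial.X i) 1 := by
      apply MvPolynomial.IsHomogeneous.sum
      intro i _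
      simpa using (MvPolynomial.isHomogeneous_C _ (a i)).mul (MvPolynomial.isHomogeneous_X _ i)
    simpa using this.pow t
  · refine ⟨MvPolynomial.monomial d 1, ?_, ?_⟩
    · rw [MvPolynomial.mem_homogeneousSubmodule]
      apply MvPolynomial.isHomogeneous_monomial
      have : d.degree = ∑ j, d j := by
        rw [Finsupp.degree]
        exact Finset.sum_subset (Finset.subset_univ _)
          (fun x _ hx => Finsupp.notMem_support_iff.mp hx)
      rw [this, hdsum]
    · intro hmem
      have hker : Submodule.span F
          {f : MvPolynomial (Fin (m + 1)) F |
            ∃ a : Fin (m + 1) → F, f = (∑ i, MvPolynomial.C (a i) * MvPolynomial.X i) ^ t}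
          ≤ LinearMap.ker (MvPolynomial.lcoeff F d) := by
        rw [Submodule.span_le]
        rintro f ⟨a, rfl⟩
        simpa [MvPolynomial.lcoeff] using stmt11_aux p hp F i0 i1 h01 t ht d hd0 hd1 hdsum a
      have := hker hmem
      simp [MvPolynomial.lcoeff] at this
end

section
/- Let p be a prime with 2 ≤ t < p or with m = 1 and t = t_J p^J − 1 (1 ≤ t_J < p), and let F be a field of characteristic p with |F| ≥ t and V an (m+1)-dimensional F-vector space. Then {a^t : a ∈ V} spans Sym^t(V). -/
open MvPolynomial

/-- If `s < p` then `p` does not divide `s.choose k`. -/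
lemma aux_small_choose {p s k : ℕ} (hp : p.Prime) (hs : s < p) (hk : k ≤ s) :
    ¬ p ∣ s.choose k := by
  intro h
  have h1 : s.choose k ∣ Nat.factorial s :=
    ⟨Nat.factorial k * Nat.factorial (s - k), by
      rw [← Nat.choose_mul_factorial_mul_factorial hk]; ring⟩
  have := hp.dvd_factorial.mp (h.trans h1)
  omega

/-- Lucas-type lemma: all binomial coefficients of `tJ * p ^ J - 1` are nonzero mod `p`. -/
lemma aux_lucas {p : ℕ} (hp : p.Prime) :
    ∀ (J tJ k : ℕ), 1 ≤ tJ → tJ < p → k ≤ tJ * p ^ J - 1 →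
      ¬ p ∣ (tJ * p ^ J - 1).choose k := by
  haveI : Fact p.Prime := ⟨hp⟩
  intro J
  induction J with
  | zero =>
    intro tJ k h1 h2 hk
    simp only [pow_zero, mul_one] at *
    exact aux_small_choose hp (by omega) hk
  | succ J ih =>
    intro tJ k h1 h2 hk
    have hp2 := hp.two_le
    set u := tJ * p ^ J with hu
    have hu1 : 1 ≤ u := Nat.one_le_iff_ne_zero.mpr (by positivity)
    set n := tJ * p ^ (J + 1) - 1 with hn
    obtain ⟨u', hu'⟩ : ∃ u', u = u' + 1 := ⟨u - 1, by omega⟩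
    have hnu : n = p * u' + (p - 1) := by
      have h3 : tJ * p ^ (J + 1) = p * u' + p := by
        calc tJ * p ^ (J + 1) = p * u := by rw [hu, pow_succ]; ring
          _ = p * u' + p := by rw [hu']; ring
      omega
    have hmod : n % p = p - 1 := by rw [hnu, Nat.mul_add_mod]; exact Nat.mod_eq_of_lt (by omega)
    have hdiv : n / p = u - 1 := by
      rw [hnu, Nat.mul_add_div (by omega)]
      rw [Nat.div_eq_of_lt (by omega)]
      omega
    intro hdvd
    have lucas := Choose.choose_modEq_choose_mod_mul_choose_div_nat (p := p) (n := n) (k := k)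
    unfold Nat.ModEq at lucas
    have hnk : n.choose k % p = 0 := Nat.mod_eq_zero_of_dvd hdvd
    rw [hnk] at lucas
    have hrhs : p ∣ (n % p).choose (k % p) * ((n / p).choose (k / p)) :=
      Nat.dvd_of_mod_eq_zero lucas.symm
    have hkp : k % p ≤ n % p := by
      rw [hmod]
      have := Nat.mod_lt k (show 0 < p by omega)
      omega
    have hkd : k / p ≤ tJ * p ^ J - 1 := by
      rw [← hdiv]
      exact Nat.div_le_div_right hk
    rcases (Nat.Prime.dvd_mul hp).mp hrhs with h | h
    · exact aux_small_choose hp (s := n % p) (hmod ▸ (by omega)) hkp h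
    · rw [hdiv] at h
      have : u - 1 = tJ * p ^ J - 1 := by rw [hu]
      exact ih tJ (k / p) h1 h2 hkd (this ▸ h)

section LinAlg

variable {F : Type*} [Field F] {M : Type*} [AddCommGroup M] [Module F M]

/-- Invert a matrix relation inside a submodule. -/
lemma aux_inv_combo {n : ℕ} (N : Submodule F M) (A : Matrix (Fin n) (Fin n) F)
    (hA : IsUnit A.det) (v : Fin n → M) (h : ∀ j, (∑ i, A j i • v i) ∈ N) (k : Fin n) :
    v k ∈ N := by
  have key : v k = ∑ j, A⁻¹ k j • ∑ i, A j i • v i := by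
    simp_rw [Finset.smul_sum, smul_smul]
    rw [Finset.sum_comm]
    have h1 : ∀ i, (∑ j, (A⁻¹ k j * A j i) • v i) = ((A⁻¹ * A) k i) • v i := by
      intro i
      rw [← Finset.sum_smul, Matrix.mul_apply]
    simp_rw [h1, Matrix.nonsing_inv_mul A hA, Matrix.one_apply]
    simp [Finset.sum_ite_eq, Finset.mem_univ]
  rw [key]
  exact Submodule.sum_mem _ fun j _ => N.smul_mem _ (h j)

/-- Vandermonde extraction step: if `P * (C c * f + g) ^ s` lies in `N` for `s + 1` distinct
values `c`, and the binomial coefficient `s.choose k` is nonzero in `F`, then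
`P * (f ^ k * g ^ (s - k))` lies in `N`. -/
lemma aux_step {σ : Type*} (N : Submodule F (MvPolynomial σ F)) (P f g : MvPolynomial σ F)
    (s k : ℕ) (hk : k ≤ s) (c : Fin (s + 1) → F) (hc : Function.Injective c)
    (hb : ((s.choose k : ℕ) : F) ≠ 0)
    (H : ∀ j : Fin (s + 1), P * (C (c j) * f + g) ^ s ∈ N) :
    P * (f ^ k * g ^ (s - k)) ∈ N := by
  set v : Fin (s + 1) → MvPolynomial σ F :=
    fun i => ((s.choose (i : ℕ) : ℕ) : F) • (P * (f ^ (i : ℕ) * g ^ (s - (i : ℕ)))) with hv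
  have hA : IsUnit (Matrix.vandermonde c).det :=
    isUnit_iff_ne_zero.mpr (Matrix.det_vandermonde_ne_zero_iff.mpr hc)
  have hmem : ∀ j, (∑ i, (Matrix.vandermonde c) j i • v i) ∈ N := by
    intro j
    have he : (∑ i, (Matrix.vandermonde c) j i • v i) = P * (C (c j) * f + g) ^ s := by
      rw [add_pow, Finset.mul_sum, ← Fin.sum_univ_eq_sum_range
        (fun i => P * ((C (c j) * f) ^ i * g ^ (s - i) * (s.choose i : MvPolynomial σ F)))]
      refine Finset.sum_congr rfl fun i _ => ?_
      rw [hv, Matrix.vandermonde_apply, smul_smul, MvPolynomial.smul_eq_C_mul, mul_pow,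
        ← C_eq_coe_nat, map_mul, map_pow]
      ring
    rw [he]
    exact H j
  have := aux_inv_combo N (Matrix.vandermonde c) hA v hmem ⟨k, by omega⟩
  rw [hv] at this
  simp only at this
  have h2 : P * (f ^ k * g ^ (s - k))
      = ((s.choose k : ℕ) : F)⁻¹ • (((s.choose k : ℕ) : F) • (P * (f ^ k * g ^ (s - k)))) := by
    rw [inv_smul_smul₀ hb]
  rw [h2]
  exact N.smul_mem _ this

end LinAlg

/-- If p is a prime with 2 ≤ t < p, or m = 1 and t = t_J·p^J − 1 with 1 ≤ t_J < p, and F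
has characteristic p with |F| ≥ t, then the t-th powers of vectors span the t-th symmetric
power of an (m+1)-dimensional space (modelled as homogeneous degree-t polynomials). -/
theorem stmt12 (p : ℕ) (hp : p.Prime) (t m : ℕ)
    (hcase : (2 ≤ t ∧ t < p) ∨
      (m = 1 ∧ ∃ J tJ : ℕ, 1 ≤ tJ ∧ tJ < p ∧ t + 1 = tJ * p ^ J))
    (F : Type*) [Field F] [CharP F p] (hF : (t : Cardinal) ≤ Cardinal.mk F) :
    Submodule.span F
      {f : MvPolynomial (Fin (m + 1)) F |
        ∃ a : Fin (m + 1) → F, f = (∑ i, MvPolynomial.C (a i) * MvPolynomial.X i) ^ t}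
      = MvPolynomial.homogeneousSubmodule (Fin (m + 1)) F t := by
  haveI : Fact p.Prime := ⟨hp⟩
  have hp2 := hp.two_le
  set S : Set (MvPolynomial (Fin (m + 1)) F) :=
    {f | ∃ a : Fin (m + 1) → F, f = (∑ i, C (a i) * X i) ^ t} with hS
  set N := Submodule.span F S with hN
  -- there are `t + 1` distinct elements of `F`
  obtain ⟨emb⟩ : Nonempty (Fin (t + 1) ↪ F) := by
    rcases le_or_gt (t + 1) p with h | h
    · exact ⟨⟨fun i => ((i : ℕ) : F), fun i j hij => Fin.ext
        (CharP.natCast_injOn_Iio F p (Set.mem_Iio.mpr (by omega))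
          (Set.mem_Iio.mpr (by omega)) hij)⟩⟩
    · have hdvd : p ∣ t + 1 := by
        rcases hcase with ⟨_, htp⟩ | ⟨_, J, tJ, h1, h2, h3⟩
        · omega
        · rcases Nat.eq_zero_or_pos J with rfl | hJ
          · rw [pow_zero, mul_one] at h3; omega
          · rw [h3]
            exact Dvd.dvd.mul_left (dvd_pow_self p (by omega)) tJ
      cases finite_or_infinite F with
      | inl hfin =>
        haveI := Fintype.ofFinite F
        obtain ⟨n, hn1, hn2⟩ := FiniteField.card F p
        have hFt : t ≤ Fintype.card F := by
          rw [Cardinal.mk_fintype] at hF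
          exact_mod_cast hF
        have hne : t ≠ Fintype.card F := by
          intro he
          have hc : p ∣ Fintype.card F := hn2 ▸ dvd_pow_self p n.pos.ne'
          have h2 : p ∣ t := he ▸ hc
          have h1 : p ∣ 1 := by
            have := Nat.dvd_sub hdvd h2
            simpa using this
          have := Nat.dvd_one.mp h1
          omega
        exact Function.Embedding.nonempty_of_card_le (by simp only [Fintype.card_fin]; omega)
      | inr hinf =>
        exact ⟨Fin.valEmbedding.trans (Infinite.natEmbedding F)⟩
  -- casting nonzero binomials
  have hcast : ∀ {a b : ℕ}, ¬ p ∣ a.choose b → ((a.choose b : ℕ) : F) ≠ 0 := by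
    intro a b h
    rwa [Ne, CharP.cast_eq_zero_iff F p]
  -- key lemma: monomials of degree `t` lie in `N`
  have key : ∀ d : Fin (m + 1) →₀ ℕ, (∑ i, d i) = t → (monomial d (1 : F)) ∈ N := by
    intro d hd
    have hmon : (monomial d (1 : F)) = ∏ i, X i ^ d i := by
      rw [← prod_X_pow_eq_monomial]
      apply Finset.prod_subset (Finset.subset_univ _)
      intro i _ hi
      rw [Finsupp.notMem_support_iff.mp hi, pow_zero]
    rcases hcase with ⟨ht2, htp⟩ | ⟨hm, J, tJ, h1, h2, h3⟩
    · -- Case 1 : `t < p`. Finset induction over the variables.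
      have main : ∀ (A : Finset (Fin (m + 1))) (e : Fin (m + 1) → ℕ) (a : Fin (m + 1) → F),
          (∑ i ∈ A, e i) ≤ t →
          ((∏ i ∈ A, X i ^ e i) * (∑ i ∈ Aᶜ, C (a i) * X i) ^ (t - ∑ i ∈ A, e i)) ∈ N := by
        intro A
        induction A using Finset.induction_on with
        | empty =>
          intro e a _
          simp only [Finset.prod_empty, one_mul, Finset.sum_empty, Nat.sub_zero,
            Finset.compl_empty]
          exact Submodule.subset_span ⟨a, rfl⟩
        | insert _ _ hj ih =>
          rename_i j A'
          intro e a h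
          rw [Finset.sum_insert hj] at h ⊢
          set s0 := ∑ i ∈ A', e i with hs0
          set s := t - s0 with hs
          set g := ∑ i ∈ (insert j A')ᶜ, C (a i) * X i with hg
          have hkle : e j ≤ s := by omega
          have hstep := aux_step N (∏ i ∈ A', X i ^ e i) (X j) g s (e j) hkle
            (fun i => emb (Fin.castLE (by omega) i))
            (fun i₁ i₂ h12 => Fin.castLE_injective _ (emb.injective h12))
            (hcast (aux_small_choose hp (show s < p by omega) hkle))
            ?_
          · have : t - (e j + s0) = s - e j := by omega
            rw [this, Finset.prod_insert hj]
            convert hstep using 1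
            ring
          · intro jj
            have hsum : (∑ i ∈ A'ᶜ, C (Function.update a j (emb (Fin.castLE (by omega) jj)) i)
                * X i) = C (emb (Fin.castLE (by omega) jj)) * X j + g := by
              have hjA : j ∈ A'ᶜ := Finset.mem_compl.mpr hj
              rw [← Finset.insert_erase hjA, Finset.sum_insert (Finset.notMem_erase _ _),
                Function.update_self]
              congr 1
              rw [hg, Finset.compl_insert]
              exact Finset.sum_congr rfl fun i hi => by
                rw [Function.update_of_ne (Finset.ne_of_mem_erase hi)]
            have := ih e (Function.update a j (emb (Fin.castLE (by omega) jj))) (by omega)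
            rwa [hsum] at this
      have := main Finset.univ (fun i => d i) (fun _ => 0) (le_of_eq hd)
      simp only [Finset.compl_univ, Finset.sum_empty, hd, Nat.sub_self, pow_zero, mul_one] at this
      rwa [hmon]
    · -- Case 2 : `m = 1`, `t = tJ * p ^ J - 1`.
      subst hm
      have hd2 : d 0 + d 1 = t := by rw [← hd, Fin.sum_univ_two]
      have ht : t = tJ * p ^ J - 1 := by
        have : 1 ≤ tJ * p ^ J := Nat.mul_pos h1 (Nat.pow_pos (n := J) (by omega))
        omega
      have hbnd : ¬ p ∣ t.choose (d 0) := by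
        rw [ht]
        exact aux_lucas hp J tJ (d 0) h1 h2 (by omega)
      have hstep := aux_step N 1 (X 0) (X 1) t (d 0) (by omega) emb emb.injective
        (hcast hbnd) ?_
      · rw [hmon, Fin.prod_univ_two]
        have : t - d 0 = d 1 := by omega
        rw [this] at hstep
        simpa using hstep
      · intro j
        refine Submodule.subset_span ⟨![emb j, 1], ?_⟩
        rw [Fin.sum_univ_two]
        simp
  apply le_antisymm
  · rw [Submodule.span_le]
    rintro f ⟨a, rfl⟩
    rw [SetLike.mem_coe, mem_homogeneousSubmodule]
    have h1 : MvPolynomial.IsHomogeneous (∑ i, C (a i) * X i) 1 := by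
      apply MvPolynomial.IsHomogeneous.sum
      intro i _
      simpa using (isHomogeneous_C _ (a i)).mul (isHomogeneous_X _ i)
    simpa using h1.pow t
  · intro f hf
    rw [mem_homogeneousSubmodule] at hf
    rw [f.as_sum]
    refine Submodule.sum_mem _ fun d hd => ?_
    have hdeg : (∑ i, d i) = t := by
      have h1 : Finsupp.degree d = t := by
        rw [Finsupp.degree_eq_weight_one]
        exact hf (MvPolynomial.mem_support_iff.mp hd)
      rw [← h1, Finsupp.degree]
      exact (Finset.sum_subset (Finset.subset_univ _)
        (fun i _ hi => Finsupp.notMem_support_iff.mp hi)).symm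
    have : monomial d (coeff d f) = (coeff d f) • monomial d (1 : F) := by
      rw [MvPolynomial.smul_monomial, smul_eq_mul, mul_one]
    rw [this]
    exact N.smul_mem _ (key d hdeg)
end

section
/- Let F be a field of characteristic 2 with |F| ≥ 3 and V a 3-dimensional F-vector space. Then the span of {a^3 : a ∈ V} in Sym^3(V) has codimension exactly 1; equivalently, the nucleus of the Veronese variety V_2^3 is a single point. -/
open MvPolynomial Finsupp Submodule Module

namespace Stmt17Aux

variable (F : Type*) [Field F]

abbrev R3 (F : Type*) [Field F] := MvPolynomial (Fin 3) F

/-- exponent vectors -/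
def v10 : Fin 10 → (Fin 3 → ℕ) :=
  ![![3,0,0], ![0,3,0], ![0,0,3], ![2,1,0], ![2,0,1], ![1,2,0], ![0,2,1], ![1,0,2], ![0,1,2], ![1,1,1]]

noncomputable def d10 : Fin 10 → (Fin 3 →₀ ℕ) := fun k => Finsupp.equivFunOnFinite.symm (v10 k)

lemma d10_inj : Function.Injective d10 :=
  Finsupp.equivFunOnFinite.symm.injective.comp (by decide)

lemma monomial_v (f : Fin 3 → ℕ) (r : F) :
    (monomial (Finsupp.equivFunOnFinite.symm f) r : R3 F)
      = C r * X 0 ^ f 0 * X 1 ^ f 1 * X 2 ^ f 2 := by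
  have h : Finsupp.equivFunOnFinite.symm f
      = Finsupp.single 0 (f 0) + Finsupp.single 1 (f 1) + Finsupp.single 2 (f 2) := by
    ext i
    fin_cases i <;> simp [Finsupp.single_apply]
  rw [h]
  simp [X_pow_eq_monomial, monomial_mul, C_mul_monomial]

noncomputable def b10 (k : Fin 10) : R3 F := monomial (d10 k) (1 : F)

lemma b10_li : LinearIndependent F (b10 F) := by
  have h : b10 F = (MvPolynomial.basisMonomials (Fin 3) F) ∘ d10 := by
    funext k
    simp [b10, MvPolynomial.coe_basisMonomials]
  rw [h]
  exact (MvPolynomial.basisMonomials (Fin 3) F).linearIndependent.comp d10 d10_inj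

noncomputable def b9 (k : Fin 9) : R3 F := b10 F k.castSucc

lemma b9_li : LinearIndependent F (b9 F) :=
  (b10_li F).comp Fin.castSucc (Fin.castSucc_injective 9)

lemma exists_d10 (v : Fin 3 →₀ ℕ) (h : v 0 + v 1 + v 2 = 3) : ∃ k, v = d10 k := by
  obtain ⟨a, b, c, rfl, h⟩ : ∃ a b c, v = Finsupp.equivFunOnFinite.symm ![a, b, c] ∧ a + b + c = 3 := by
    refine ⟨v 0, v 1, v 2, ?_, h⟩
    ext i
    fin_cases i <;> simp
  have ha : a ≤ 3 := by omega
  have hb : b ≤ 3 := by omega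
  have hc : c ≤ 3 := by omega
  suffices h : ∃ k, ![a, b, c] = v10 k by
    obtain ⟨k, hk⟩ := h
    exact ⟨k, by rw [hk]; rfl⟩
  interval_cases a <;> interval_cases b <;> interval_cases c <;> first | omega | decide

lemma degree_eq (v : Fin 3 →₀ ℕ) : Finsupp.degree v = v 0 + v 1 + v 2 := by
  rw [Finsupp.degree, ← Fin.sum_univ_three (fun i => v i)]
  exact Finset.sum_subset (Finset.subset_univ _) (fun i _ hi => Finsupp.notMem_support_iff.mp hi)

lemma homog_eq_span : homogeneousSubmodule (Fin 3) F 3 = span F (Set.range (b10 F)) := by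
  apply le_antisymm
  · intro p hp
    rw [p.as_sum]
    refine Submodule.sum_mem _ fun v hv => ?_
    have hcoeff : coeff v p ≠ 0 := MvPolynomial.mem_support_iff.mp hv
    have hdeg : Finsupp.degree v = 3 := by
      rw [Finsupp.degree_eq_weight_one]
      exact hp hcoeff
    rw [degree_eq] at hdeg
    obtain ⟨k, rfl⟩ := exists_d10 v hdeg
    have h2 : (monomial (d10 k)) (coeff (d10 k) p) = (coeff (d10 k) p) • b10 F k := by
      rw [b10, MvPolynomial.smul_monomial, smul_eq_mul, mul_one]
    rw [h2]
    exact Submodule.smul_mem _ _ (subset_span ⟨k, rfl⟩)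
  · rw [span_le]
    rintro _ ⟨k, rfl⟩
    refine isHomogeneous_monomial _ ?_
    rw [degree_eq]
    simp only [d10, Finsupp.coe_equivFunOnFinite_symm]
    exact (by decide : ∀ k, v10 k 0 + v10 k 1 + v10 k 2 = 3) k


variable [CharP F 2]

lemma two_eq_zero : (2 : R3 F) = 0 := by
  exact_mod_cast CharP.cast_eq_zero (R3 F) 2

lemma key_expand (x y z : F) :
    (C x * X 0 + C y * X 1 + C z * X 2 : R3 F) ^ 3
      = C (x^3) * (X 0 ^ 3) + C (y^3) * (X 1 ^ 3) + C (z^3) * (X 2 ^ 3)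
        + C (x^2*y) * (X 0 ^ 2 * X 1) + C (x^2*z) * (X 0 ^ 2 * X 2)
        + C (x*y^2) * (X 0 * X 1 ^ 2) + C (y^2*z) * (X 1 ^ 2 * X 2)
        + C (x*z^2) * (X 0 * X 2 ^ 2) + C (y*z^2) * (X 1 * X 2 ^ 2) := by
  have h2 := two_eq_zero F
  simp only [map_pow, map_mul]
  linear_combination (C x ^ 2 * C y * (X 0 ^ 2 * X 1) + C x ^ 2 * C z * (X 0 ^ 2 * X 2)
    + C x * C y ^ 2 * (X 0 * X 1 ^ 2) + C y ^ 2 * C z * (X 1 ^ 2 * X 2)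
    + C x * C z ^ 2 * (X 0 * X 2 ^ 2) + C y * C z ^ 2 * (X 1 * X 2 ^ 2)
    + 3 * C x * C y * C z * (X 0 * X 1 * X 2) : R3 F) * h2

lemma key2 (ε : F) (hε0 : ε ≠ 0) (hε1 : ε ≠ 1) (S : Submodule F (R3 F)) (x y : R3 F)
    (h1 : x ^ 3 ∈ S) (h2 : y ^ 3 ∈ S) (h3 : (x + y) ^ 3 ∈ S)
    (h4 : (x + C ε * y) ^ 3 ∈ S) : x ^ 2 * y ∈ S := by
  have hu : (x + y) ^ 3 - x ^ 3 - y ^ 3 ∈ S := sub_mem (sub_mem h3 h1) h2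
  have hv : (x + C ε * y) ^ 3 - x ^ 3 - ε ^ 3 • y ^ 3 ∈ S :=
    sub_mem (sub_mem h4 h1) (S.smul_mem _ h2)
  have hw : ((x + C ε * y) ^ 3 - x ^ 3 - ε ^ 3 • y ^ 3)
      - ε ^ 2 • ((x + y) ^ 3 - x ^ 3 - y ^ 3) ∈ S := sub_mem hv (S.smul_mem _ hu)
  have hne : ε - ε ^ 2 ≠ 0 := by
    have h1' : (1 : F) - ε ≠ 0 := fun h => hε1 (sub_eq_zero.mp h).symm
    have := mul_ne_zero hε0 h1'
    intro h; apply this; linear_combination h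
  have heq : ((x + C ε * y) ^ 3 - x ^ 3 - ε ^ 3 • y ^ 3)
      - ε ^ 2 • ((x + y) ^ 3 - x ^ 3 - y ^ 3) = (ε - ε ^ 2) • (x ^ 2 * y) := by
    have h2R := two_eq_zero F
    simp only [MvPolynomial.smul_eq_C_mul, map_pow, map_sub]
    linear_combination ((C ε - C ε ^ 2) * x ^ 2 * y : R3 F) * h2R
  rw [heq] at hw
  have : x ^ 2 * y = (ε - ε ^ 2)⁻¹ • ((ε - ε ^ 2) • (x ^ 2 * y)) := by
    rw [smul_smul, inv_mul_cancel₀ hne, one_smul]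
  rw [this]
  exact S.smul_mem _ hw


lemma exists_eps (hF : (3 : Cardinal) ≤ Cardinal.mk F) : ∃ ε : F, ε ≠ 0 ∧ ε ≠ 1 := by
  classical
  by_contra h
  push_neg at h
  have hinj : Function.Injective
      (fun x : F => ULift.up.{_, 0} (if x = 0 then (0 : Fin 2) else 1)) := by
    intro a b hab
    have hab' := congrArg ULift.down hab
    simp only at hab'
    split_ifs at hab' with ha hb hb
    · rw [ha, hb]
    · exact absurd hab' (by decide)
    · exact absurd hab' (by decide)
    · rw [h a ha, h b hb]
  have hle := Cardinal.mk_le_of_injective hinj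
  rw [Cardinal.mk_uLift, Cardinal.mk_fin, Cardinal.lift_natCast] at hle
  have h32 : (3 : Cardinal) ≤ ((2 : ℕ) : Cardinal) := hF.trans hle
  norm_num at h32

lemma span_cubes_eq (hF : (3 : Cardinal) ≤ Cardinal.mk F) :
    Submodule.span F
        {f : MvPolynomial (Fin 3) F |
          ∃ a : Fin 3 → F, f = (∑ i, MvPolynomial.C (a i) * MvPolynomial.X i) ^ 3}
      = span F (Set.range (b9 F)) := by
  obtain ⟨ε, hε0, hε1⟩ := exists_eps F hF
  set S := Submodule.span F
      {f : MvPolynomial (Fin 3) F |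
        ∃ a : Fin 3 → F, f = (∑ i, MvPolynomial.C (a i) * MvPolynomial.X i) ^ 3} with hSdef
  have hb : ∀ (k : Fin 9) (f : Fin 3 → ℕ), v10 k.castSucc = f →
      b9 F k = C (1 : F) * X 0 ^ f 0 * X 1 ^ f 1 * X 2 ^ f 2 := by
    intro k f hf
    rw [b9, b10, d10, hf, monomial_v]
  have e0 : b9 F 0 = (X 0 ^ 3 : R3 F) := by rw [hb 0 ![3,0,0] (by decide)]; simp
  have e1 : b9 F 1 = (X 1 ^ 3 : R3 F) := by rw [hb 1 ![0,3,0] (by decide)]; simp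
  have e2 : b9 F 2 = (X 2 ^ 3 : R3 F) := by rw [hb 2 ![0,0,3] (by decide)]; simp
  have e3 : b9 F 3 = (X 0 ^ 2 * X 1 : R3 F) := by rw [hb 3 ![2,1,0] (by decide)]; simp
  have e4 : b9 F 4 = (X 0 ^ 2 * X 2 : R3 F) := by rw [hb 4 ![2,0,1] (by decide)]; simp
  have e5 : b9 F 5 = (X 0 * X 1 ^ 2 : R3 F) := by rw [hb 5 ![1,2,0] (by decide)]; simp
  have e6 : b9 F 6 = (X 1 ^ 2 * X 2 : R3 F) := by rw [hb 6 ![0,2,1] (by decide)]; simp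
  have e7 : b9 F 7 = (X 0 * X 2 ^ 2 : R3 F) := by rw [hb 7 ![1,0,2] (by decide)]; simp
  have e8 : b9 F 8 = (X 1 * X 2 ^ 2 : R3 F) := by rw [hb 8 ![0,1,2] (by decide)]; simp
  have hk : ∀ k : Fin 9, b9 F k ∈ span F (Set.range (b9 F)) := fun k => subset_span ⟨k, rfl⟩
  have hC : ∀ (r : F) (p : R3 F), p ∈ span F (Set.range (b9 F)) →
      C r * p ∈ span F (Set.range (b9 F)) := fun r p hp => by
    rw [← MvPolynomial.smul_eq_C_mul]; exact Submodule.smul_mem _ _ hp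
  apply le_antisymm
  · rw [Submodule.span_le]
    rintro f ⟨v, rfl⟩
    simp only [Set.mem_setOf_eq, SetLike.mem_coe]
    rw [Fin.sum_univ_three, key_expand]
    exact add_mem (add_mem (add_mem (add_mem (add_mem (add_mem (add_mem (add_mem
      (hC _ _ (e0 ▸ hk 0)) (hC _ _ (e1 ▸ hk 1))) (hC _ _ (e2 ▸ hk 2)))
      (hC _ _ (e3 ▸ hk 3))) (hC _ _ (e4 ▸ hk 4))) (hC _ _ (e5 ▸ hk 5)))
      (hC _ _ (e6 ▸ hk 6))) (hC _ _ (e7 ▸ hk 7))) (hC _ _ (e8 ▸ hk 8))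
  · rw [Submodule.span_le]
    rintro _ ⟨k, rfl⟩
    have cube_mem : ∀ v : Fin 3 → F,
        (C (v 0) * X 0 + C (v 1) * X 1 + C (v 2) * X 2 : R3 F) ^ 3 ∈ S :=
      fun v => subset_span ⟨v, by rw [Fin.sum_univ_three]⟩
    have hx0 : (X 0 ^ 3 : R3 F) ∈ S := by simpa using cube_mem ![1,0,0]
    have hx1 : (X 1 ^ 3 : R3 F) ∈ S := by simpa using cube_mem ![0,1,0]
    have hx2 : (X 2 ^ 3 : R3 F) ∈ S := by simpa using cube_mem ![0,0,1]
    have h01 : ((X 0 + X 1 : R3 F)) ^ 3 ∈ S := by simpa using cube_mem ![1,1,0]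
    have h02 : ((X 0 + X 2 : R3 F)) ^ 3 ∈ S := by simpa using cube_mem ![1,0,1]
    have h12 : ((X 1 + X 2 : R3 F)) ^ 3 ∈ S := by simpa using cube_mem ![0,1,1]
    have h01e : ((X 0 + C ε * X 1 : R3 F)) ^ 3 ∈ S := by simpa using cube_mem ![1,ε,0]
    have h02e : ((X 0 + C ε * X 2 : R3 F)) ^ 3 ∈ S := by simpa using cube_mem ![1,0,ε]
    have h10e : ((X 1 + C ε * X 0 : R3 F)) ^ 3 ∈ S := by
      simpa [add_comm] using cube_mem ![ε,1,0]
    have h12e : ((X 1 + C ε * X 2 : R3 F)) ^ 3 ∈ S := by simpa using cube_mem ![0,1,ε]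
    have h20e : ((X 2 + C ε * X 0 : R3 F)) ^ 3 ∈ S := by
      simpa [add_comm] using cube_mem ![ε,0,1]
    have h21e : ((X 2 + C ε * X 1 : R3 F)) ^ 3 ∈ S := by
      simpa [add_comm] using cube_mem ![0,ε,1]
    have m01 : (X 0 ^ 2 * X 1 : R3 F) ∈ S := key2 F ε hε0 hε1 S _ _ hx0 hx1 h01 h01e
    have m02 : (X 0 ^ 2 * X 2 : R3 F) ∈ S := key2 F ε hε0 hε1 S _ _ hx0 hx2 h02 h02e
    have m12 : (X 1 ^ 2 * X 2 : R3 F) ∈ S := key2 F ε hε0 hε1 S _ _ hx1 hx2 h12 h12e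
    have m10 : (X 0 * X 1 ^ 2 : R3 F) ∈ S := by
      rw [mul_comm]
      exact key2 F ε hε0 hε1 S (X 1) (X 0) hx1 hx0 (by rw [add_comm (X 1 : R3 F) (X 0)]; exact h01) h10e
    have m20 : (X 0 * X 2 ^ 2 : R3 F) ∈ S := by
      rw [mul_comm]
      exact key2 F ε hε0 hε1 S (X 2) (X 0) hx2 hx0 (by rw [add_comm (X 2 : R3 F) (X 0)]; exact h02) h20e
    have m21 : (X 1 * X 2 ^ 2 : R3 F) ∈ S := by
      rw [mul_comm]
      exact key2 F ε hε0 hε1 S (X 2) (X 1) hx2 hx1 (by rw [add_comm (X 2 : R3 F) (X 1)]; exact h12) h21e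
    fin_cases k
    · exact e0 ▸ hx0
    · exact e1 ▸ hx1
    · exact e2 ▸ hx2
    · exact e3 ▸ m01
    · exact e4 ▸ m02
    · exact e5 ▸ m10
    · exact e6 ▸ m12
    · exact e7 ▸ m20
    · exact e8 ▸ m21

end Stmt17Aux

/-- Over a field of characteristic 2 with at least 3 elements, the span of the cubes
{a^3 : a ∈ V} in Sym³ of a 3-dimensional space (modelled as homogeneous cubic polynomials
in 3 variables) has codimension exactly 1; the nucleus of V_2^3 is a single point. -/
theorem stmt17 (F : Type*) [Field F] [CharP F 2] (hF : (3 : Cardinal) ≤ Cardinal.mk F) :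
    Module.finrank F (MvPolynomial.homogeneousSubmodule (Fin 3) F 3)
      = Module.finrank F (Submodule.span F
          {f : MvPolynomial (Fin 3) F |
            ∃ a : Fin 3 → F, f = (∑ i, MvPolynomial.C (a i) * MvPolynomial.X i) ^ 3})
        + 1 := by
  rw [Stmt17Aux.span_cubes_eq F hF, Stmt17Aux.homog_eq_span F,
    finrank_span_eq_card (Stmt17Aux.b10_li F), finrank_span_eq_card (Stmt17Aux.b9_li F),
    Fintype.card_fin, Fintype.card_fin]
end
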